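/- arXiv:1407.5433 — 3 statements merged into one kernel-verified Lean document; each statement's English description precedes it below -/
import Mathlib

section
/- For every prime p and every positive integer α, the q-series (q;q)_∞^{p^α} is congruent to (q^p;q^p)_∞^{p^{α-1}} modulo p^α, i.e. every coefficient of the difference is divisible by p^α. -/
open PowerSeries

/-- Coefficientwise: `(q^j; q^j)_∞`, the Euler product with `q` replaced by `q^j`. -/
noncomputable def eulerSub (j : ℕ) : PowerSeries ℤ :=
  PowerSeries.mk fun n =>
    PowerSeries.coeff (R := ℤ) n (∏ k ∈ Finset.range (n + 1), (1 - PowerSeries.X ^ (j * (k + 1))))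

open scoped Classical in
/-- `ψ(q^j)` where `ψ(q) = Σ_{k≥0} q^{k(k+1)/2}`. -/
noncomputable def psiSub (j : ℕ) : PowerSeries ℤ :=
  PowerSeries.mk fun n => if ∃ k, j * (k * (k + 1) / 2) = n then 1 else 0

/-- `A(q^j)` where `A(q) = (q^2;q^2)_∞ (q^3;q^3)_∞^2 / ((q;q)_∞ (q^6;q^6)_∞)`. -/
noncomputable def ASub (j : ℕ) : PowerSeries ℤ :=
  eulerSub (2 * j) * eulerSub (3 * j) ^ 2 *
    PowerSeries.invOfUnit (eulerSub j * eulerSub (6 * j)) 1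

/-- `ψ(-q)`. -/
noncomputable def psiNeg : PowerSeries ℤ :=
  PowerSeries.mk fun n => (-1) ^ n * PowerSeries.coeff (R := ℤ) n (psiSub 1)

/-- `pod_{-3}(n)`, defined by `Σ pod_{-3}(n) q^n = 1/ψ(-q)^3`. -/
noncomputable def pod3 (n : ℕ) : ℤ :=
  PowerSeries.coeff (R := ℤ) n (PowerSeries.invOfUnit (psiNeg ^ 3) 1)

/-- `pod(n) = pod_{-1}(n)`, defined by `Σ pod(n) q^n = 1/ψ(-q)`. -/
noncomputable def pod1 (n : ℕ) : ℤ :=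
  PowerSeries.coeff (R := ℤ) n (PowerSeries.invOfUnit psiNeg 1)

/-- `t_k(n)`: number of ordered `k`-tuples of triangular numbers summing to `n`. -/
noncomputable def triRep (k n : ℕ) : ℕ :=
  Set.ncard {v : Fin k → ℕ | (∀ i, ∃ m, m * (m + 1) / 2 = v i) ∧ ∑ i, v i = n}

/-- `r_k(n)`: number of representations of `n` as an ordered sum of `k` squares. -/
noncomputable def sqRep (k n : ℕ) : ℕ :=
  Set.ncard {x : Fin k → ℤ | ∑ i, (x i) ^ 2 = (n : ℤ)}

section aux

lemma coeff_mul_one_sub_X_pow (f : PowerSeries ℤ) {i m : ℕ} (him : i < m) :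
    PowerSeries.coeff (R := ℤ) i (f * (1 - PowerSeries.X ^ m)) = PowerSeries.coeff (R := ℤ) i f := by
  rw [mul_sub, mul_one, map_sub, PowerSeries.coeff_mul_X_pow', if_neg (by omega), sub_zero]

lemma coeff_eulerSub_prod (j : ℕ) {i n : ℕ} (hin : i ≤ n) :
    PowerSeries.coeff (R := ℤ) i (eulerSub j) =
      PowerSeries.coeff (R := ℤ) i (∏ k ∈ Finset.range (n + 1), (1 - PowerSeries.X ^ (j * (k + 1)))) := by
  have base : PowerSeries.coeff (R := ℤ) i (eulerSub j) =
      PowerSeries.coeff (R := ℤ) i (∏ k ∈ Finset.range (i + 1), (1 - PowerSeries.X ^ (j * (k + 1)))) := by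
    simp [eulerSub, PowerSeries.coeff_mk]
  · have key : ∀ N, i + 1 ≤ N →
        PowerSeries.coeff (R := ℤ) i (∏ k ∈ Finset.range N, (1 - PowerSeries.X ^ (j * (k + 1)))) =
        PowerSeries.coeff (R := ℤ) i (∏ k ∈ Finset.range (i + 1), (1 - PowerSeries.X ^ (j * (k + 1)))) := by
      intro N hN
      induction N, hN using Nat.le_induction with
      | base => rfl
      | succ N hN ih =>
        rw [Finset.prod_range_succ]
        rcases Nat.eq_zero_or_pos j with hj | hj
        · simp [hj]
        · rw [coeff_mul_one_sub_X_pow _ (by nlinarith), ih]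
    rw [base, key (n+1) (by omega)]

lemma coeff_pow_congr (f g : PowerSeries ℤ) (n s : ℕ)
    (h : ∀ i ≤ n, PowerSeries.coeff (R := ℤ) i f = PowerSeries.coeff (R := ℤ) i g) :
    ∀ i ≤ n, PowerSeries.coeff (R := ℤ) i (f ^ s) = PowerSeries.coeff (R := ℤ) i (g ^ s) := by
  induction s with
  | zero => simp
  | succ s ih =>
    intro i hi
    rw [pow_succ, pow_succ, PowerSeries.coeff_mul, PowerSeries.coeff_mul]
    refine Finset.sum_congr rfl fun x hx => ?_
    rw [Finset.HasAntidiagonal.mem_antidiagonal] at hx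
    rw [ih x.1 (by omega), h x.2 (by omega)]

lemma dvd_of_map_zero (p : ℕ) (f : PowerSeries ℤ)
    (h : PowerSeries.map (Int.castRingHom (ZMod p)) f = 0) : (p : PowerSeries ℤ) ∣ f := by
  refine ⟨PowerSeries.mk fun n => (PowerSeries.coeff (R := ℤ) n f) / p, ?_⟩
  ext n
  have hd : (p : ℤ) ∣ PowerSeries.coeff (R := ℤ) n f := by
    have := congrArg (PowerSeries.coeff (R := ZMod p) n) h
    rw [PowerSeries.coeff_map] at this
    simpa using (ZMod.intCast_zmod_eq_zero_iff_dvd _ _).mp (by simpa using this)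
  have : (p : PowerSeries ℤ) = PowerSeries.C (R := ℤ) (p : ℤ) := by simp
  rw [this, PowerSeries.coeff_C_mul, PowerSeries.coeff_mk]
  exact (Int.mul_ediv_cancel' hd).symm

end aux

theorem euler_prod_pow_prime_congr (p : ℕ) (hp : p.Prime) (a : ℕ) (ha : 1 ≤ a) (n : ℕ) :
    Int.ModEq ((p : ℤ) ^ a)
      (PowerSeries.coeff (R := ℤ) n (eulerSub 1 ^ p ^ a))
      (PowerSeries.coeff (R := ℤ) n (eulerSub p ^ p ^ (a - 1))) := by
  haveI := Fact.mk hp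
  haveI : CharP (PowerSeries (ZMod p)) p :=
    charP_of_injective_ringHom (PowerSeries.C_injective) p
  set F : PowerSeries ℤ := ∏ k ∈ Finset.range (n + 1), (1 - PowerSeries.X ^ (1 * (k + 1))) with hF
  set G : PowerSeries ℤ := ∏ k ∈ Finset.range (n + 1), (1 - PowerSeries.X ^ (p * (k + 1))) with hG
  have h1 : PowerSeries.coeff (R := ℤ) n (eulerSub 1 ^ p ^ a) = PowerSeries.coeff (R := ℤ) n (F ^ p ^ a) :=
    coeff_pow_congr _ _ n _ (fun i hi => coeff_eulerSub_prod 1 hi) n le_rfl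
  have h2 : PowerSeries.coeff (R := ℤ) n (eulerSub p ^ p ^ (a - 1)) =
      PowerSeries.coeff (R := ℤ) n (G ^ p ^ (a - 1)) :=
    coeff_pow_congr _ _ n _ (fun i hi => coeff_eulerSub_prod p hi) n le_rfl
  -- key divisibility: p ∣ F^p - G
  have hkey : (p : PowerSeries ℤ) ∣ F ^ p - G := by
    apply dvd_of_map_zero
    rw [map_sub, map_pow, sub_eq_zero]
    rw [hF, hG, map_prod, map_prod, ← Finset.prod_pow]
    refine Finset.prod_congr rfl fun k _ => ?_
    rw [map_sub, map_sub, map_one, map_pow, map_pow, PowerSeries.map_X]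
    rw [sub_pow_char, one_pow, ← pow_mul, one_mul, mul_comm (k+1) p]
  have hdvd := dvd_sub_pow_of_dvd_sub hkey (a - 1)
  rw [← pow_mul, ← pow_succ'] at hdvd
  rw [Nat.sub_add_cancel ha] at hdvd
  have hcoeff : ((p : ℤ) ^ a) ∣ PowerSeries.coeff (R := ℤ) n (F ^ p ^ a - G ^ p ^ (a - 1)) := by
    obtain ⟨c, hc⟩ := hdvd
    have : (p : PowerSeries ℤ) ^ a = PowerSeries.C (R := ℤ) ((p : ℤ) ^ a) := by simp
    rw [this] at hc
    exact ⟨PowerSeries.coeff (R := ℤ) n c, by rw [hc, PowerSeries.coeff_C_mul]⟩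
  rw [map_sub] at hcoeff
  rw [h1, h2]
  exact (Int.modEq_iff_dvd.mpr hcoeff).symm
end

section
/- The theta function ψ satisfies the 3-dissection ψ(q) = A(q^3) + q ψ(q^9), where A(q) = (q^2;q^2)_∞ (q^3;q^3)_∞^2 / ((q;q)_∞ (q^6;q^6)_∞). -/
open PowerSeries

set_option maxHeartbeats 1000000
set_option linter.unusedTactic false


noncomputable section
namespace PsiAux

abbrev R := PowerSeries ℤ

/-- `3 * (m(3m+1)/2)`, the scaled pentagonal exponent. -/
def pentE (m : ℤ) : ℕ := 3 * ((m * (3 * m + 1)).toNat / 2)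

lemma pent_core (m : ℤ) : 0 ≤ m * (3 * m + 1) ∧ (2:ℤ) ∣ m * (3 * m + 1) := by
  constructor
  · nlinarith [sq_nonneg (6 * m + 1)]
  · rcases Int.even_or_odd m with ⟨t, ht⟩ | ⟨t, ht⟩
    · exact ⟨t * (3 * m + 1), by rw [ht]; ring⟩
    · exact ⟨m * (3 * t + 2), by rw [ht]; ring⟩

lemma two_pentE (m : ℤ) : 2 * pentE m = 3 * (m * (3 * m + 1)).toNat := by
  obtain ⟨h1, h2⟩ := pent_core m
  unfold pentE
  omega

/-- Gaussian binomial `[n, j]` in the variable `Q = X^9`. -/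
def gbQ : ℕ → ℤ → R
  | 0, j => if j = 0 then 1 else 0
  | n+1, j => gbQ n (j-1) + X ^ (9 * j.toNat) * gbQ n j

lemma gbQ_base (j : ℤ) : gbQ 0 j = if j = 0 then 1 else 0 := rfl

lemma gbQ_succ (n : ℕ) (j : ℤ) :
    gbQ (n+1) j = gbQ n (j-1) + X ^ (9 * j.toNat) * gbQ n j := rfl

lemma gbQ_neg : ∀ (n : ℕ) (j : ℤ), j < 0 → gbQ n j = 0
  | 0, j, h => by rw [gbQ_base, if_neg (by omega)]
  | n+1, j, h => by
      rw [gbQ_succ, gbQ_neg n (j-1) (by omega), gbQ_neg n j h]; ring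

lemma gbQ_zero : ∀ (n : ℕ), gbQ n 0 = 1
  | 0 => by rw [gbQ_base, if_pos rfl]
  | n+1 => by
      rw [gbQ_succ, gbQ_neg n (0-1) (by omega), gbQ_zero n]; simp

lemma gbQ_gt : ∀ (n : ℕ) (j : ℤ), (n : ℤ) < j → gbQ n j = 0
  | 0, j, h => by rw [gbQ_base, if_neg (by omega)]
  | n+1, j, h => by
      have h' : (n : ℤ) < j - 1 := by push_cast at h ⊢; omega
      have h'' : (n : ℤ) < j := by push_cast at h ⊢; omega
      rw [gbQ_succ, gbQ_gt n (j-1) h', gbQ_gt n j h'']; ring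

lemma gbQ_diag : ∀ (n : ℕ), gbQ n n = 1
  | 0 => by rw [Nat.cast_zero, gbQ_zero]
  | n+1 => by
      have h1 : ((n+1 : ℕ) : ℤ) = (n : ℤ) + 1 := by push_cast; ring
      rw [gbQ_succ, h1, gbQ_gt n ((n:ℤ)+1) (by omega)]
      have h2 : ((n:ℤ) + 1) - 1 = (n:ℤ) := by ring
      rw [h2, gbQ_diag n]; ring

/-- second Pascal rule -/
lemma gbQ_rule2 : ∀ (n : ℕ) (j : ℤ),
    gbQ (n+1) j = X ^ (9 * ((n : ℤ) + 1 - j).toNat) * gbQ n (j-1) + gbQ n j := by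
  intro n
  induction n with
  | zero =>
    intro j
    rcases lt_trichotomy j 0 with h | h | h
    · rw [gbQ_neg 1 j h, gbQ_neg 0 (j-1) (by omega), gbQ_neg 0 j h]; ring
    · subst h
      rw [gbQ_zero, gbQ_zero, gbQ_neg 0 (0-1) (by omega)]; ring
    · rcases eq_or_lt_of_le (by omega : (1:ℤ) ≤ j) with h1 | h1
      · rw [← h1]
        rw [gbQ_succ, gbQ_gt 0 1 (by omega)]
        norm_num [gbQ_zero]
      · rw [gbQ_gt 1 j (by push_cast; omega), gbQ_gt 0 (j-1) (by omega),
          gbQ_gt 0 j (by omega)]; ring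
  | succ n ih =>
    intro j
    rcases lt_trichotomy j 0 with h | h | h
    · rw [gbQ_neg _ j h, gbQ_neg _ (j-1) (by omega), gbQ_neg _ j h]; ring
    · subst h
      rw [gbQ_zero, gbQ_zero, gbQ_neg _ (0-1) (by omega)]; ring
    · by_cases hbig : ((n : ℤ) + 2) < j
      · rw [gbQ_gt (n+2) j (by push_cast; omega), gbQ_gt (n+1) (j-1) (by push_cast; omega),
          gbQ_gt (n+1) j (by push_cast; omega)]; ring
      · by_cases hj : j = (n : ℤ) + 2
        · subst hj
          have d1 : ((n:ℤ) + 2) = ((n+2:ℕ):ℤ) := by push_cast; ring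
          have d2 : ((n:ℤ) + 2) - 1 = ((n+1:ℕ):ℤ) := by push_cast; ring
          rw [d1, gbQ_diag (n+2), ← d1, d2, gbQ_diag (n+1), ← d2,
              gbQ_gt (n+1) ((n:ℤ)+2) (by push_cast; omega)]
          simp
        · -- 1 ≤ j ≤ n+1
          have hle : j ≤ (n : ℤ) + 1 := by omega
          have eC : 9 * ((n:ℤ) + 1 - (j-1)).toNat = 9 * (((n+1:ℕ):ℤ) + 1 - j).toNat := by
            push_cast; omega
          have eE : 9 * j.toNat + 9 * ((n:ℤ) + 1 - j).toNat
              = 9 * (((n+1:ℕ):ℤ) + 1 - j).toNat + 9 * (j-1).toNat := by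
            push_cast; omega
          calc gbQ (n+1+1) j = gbQ (n+1) (j-1) + X ^ (9 * j.toNat) * gbQ (n+1) j :=
                gbQ_succ _ _
            _ = (X ^ (9 * ((n:ℤ) + 1 - (j-1)).toNat) * gbQ n (j-1-1) + gbQ n (j-1)) +
                X ^ (9 * j.toNat) *
                  (X ^ (9 * ((n:ℤ) + 1 - j).toNat) * gbQ n (j-1) + gbQ n j) := by
                rw [ih (j-1), ih j]
            _ = X ^ (9 * (((n+1:ℕ):ℤ) + 1 - j).toNat) *
                  (gbQ n (j-1-1) + X ^ (9 * (j-1).toNat) * gbQ n (j-1)) +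
                (gbQ n (j-1) + X ^ (9 * j.toNat) * gbQ n j) := by
                rw [← eC]
                have : (X:R) ^ (9 * j.toNat) * X ^ (9 * ((n:ℤ) + 1 - j).toNat)
                    = X ^ (9 * ((n:ℤ) + 1 - (j-1)).toNat) * X ^ (9 * (j-1).toNat) := by
                  rw [← pow_add, ← pow_add]
                  congr 1
                  omega
                calc _ = X ^ (9 * ((n:ℤ) + 1 - (j-1)).toNat) * gbQ n (j-1-1) + gbQ n (j-1) +
                      (X ^ (9 * j.toNat) * X ^ (9 * ((n:ℤ) + 1 - j).toNat)) * gbQ n (j-1) +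
                      X ^ (9 * j.toNat) * gbQ n j := by ring
                  _ = _ := by rw [this]; ring
            _ = _ := by rw [← gbQ_succ n (j-1), ← gbQ_succ n j]

end PsiAux

namespace PsiAux2
open PsiAux Finset

lemma pent_up (N i : ℕ) (hi : i ≤ 2*N) :
    9 * (2*N - i) + pentE ((i:ℤ) - N + 1) = 9*N + 6 + pentE ((i:ℤ) - N) := by
  set m : ℤ := (i:ℤ) - N with hm
  have h1 := two_pentE m
  have h2 := two_pentE (m+1)
  have e : (m+1) * (3*(m+1)+1) = m * (3*m+1) + (6*m+4) := by ring
  have n1 := (pent_core m).1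
  have n2 := (pent_core (m+1)).1
  rw [e] at h2
  omega

lemma pent_down (N i : ℕ) :
    9 * i + pentE ((i:ℤ) - N - 1) = 9*N + 3 + pentE ((i:ℤ) - N) := by
  set m : ℤ := (i:ℤ) - N with hm
  have h1 := two_pentE m
  have h2 := two_pentE (m-1)
  have e : (m-1) * (3*(m-1)+1) = m * (3*m+1) - (6*m-2) := by ring
  have n1 := (pent_core m).1
  have n2 := (pent_core (m-1)).1
  rw [e] at h2
  omega

lemma gbQ_expand (N j : ℕ) :
    gbQ (2*N+2) (j:ℤ) = X ^ (9 * ((2*(N:ℤ)+2 - j).toNat)) * gbQ (2*N) ((j:ℤ)-2)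
      + (1 + X ^ (9*(2*N+1))) * gbQ (2*N) ((j:ℤ)-1)
      + X ^ (9*j) * gbQ (2*N) (j:ℤ) := by
  have h1 : gbQ (2*N+2) (j:ℤ)
      = gbQ (2*N+1) ((j:ℤ)-1) + X ^ (9*((j:ℤ).toNat)) * gbQ (2*N+1) (j:ℤ) := gbQ_succ _ _
  rw [h1, gbQ_rule2 (2*N) ((j:ℤ)-1), gbQ_rule2 (2*N) (j:ℤ)]
  have e1 : 9 * (((2*N:ℕ):ℤ) + 1 - ((j:ℤ)-1)).toNat = 9 * ((2*(N:ℤ)+2 - j).toNat) := by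
    push_cast; omega
  rw [e1]
  have e2 : ((j:ℤ) - 1 - 1) = (j:ℤ) - 2 := by ring
  rw [e2]
  by_cases hj : j ≤ 2*N+1
  · have e3 : (9 : ℕ) * (j:ℤ).toNat + 9 * (((2*N:ℕ):ℤ) + 1 - (j:ℤ)).toNat = 9*(2*N+1) := by
      push_cast; omega
    have e4 : (X:R) ^ (9 * (j:ℤ).toNat) * X ^ (9 * (((2*N:ℕ):ℤ) + 1 - (j:ℤ)).toNat)
        = X ^ (9*(2*N+1)) := by rw [← pow_add, e3]
    have e5 : (9:ℕ) * (j:ℤ).toNat = 9 * j := by omega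
    calc X ^ (9 * (2 * (N:ℤ) + 2 - (j:ℤ)).toNat) * gbQ (2 * N) ((j:ℤ) - 2) + gbQ (2*N) ((j:ℤ)-1)
          + X ^ (9 * (j:ℤ).toNat) *
            (X ^ (9 * (((2*N:ℕ):ℤ) + 1 - (j:ℤ)).toNat) * gbQ (2*N) ((j:ℤ)-1) + gbQ (2*N) (j:ℤ))
        = X ^ (9 * (2 * (N:ℤ) + 2 - (j:ℤ)).toNat) * gbQ (2 * N) ((j:ℤ) - 2)
          + (1 + X ^ (9 * (j:ℤ).toNat) * X ^ (9 * (((2*N:ℕ):ℤ) + 1 - (j:ℤ)).toNat)) * gbQ (2*N) ((j:ℤ)-1)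
          + X ^ (9 * (j:ℤ).toNat) * gbQ (2*N) (j:ℤ) := by ring
      _ = _ := by rw [e4, e5]
  · have z1 : gbQ (2*N) ((j:ℤ)-1) = 0 := gbQ_gt _ _ (by push_cast; omega)
    have z2 : gbQ (2*N) (j:ℤ) = 0 := gbQ_gt _ _ (by push_cast; omega)
    rw [z1, z2]; ring

lemma fjtp (N : ℕ) :
    (∏ i ∈ range N, ((1 + X^(9*i+3)) * (1 + X^(9*i+6))) : R)
      = ∑ j ∈ range (2*N+1), gbQ (2*N) (j:ℤ) * X ^ pentE ((j:ℤ) - (N:ℤ)) := by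
  induction N with
  | zero =>
    simp only [range_zero, prod_empty, range_one, sum_singleton]
    norm_num [gbQ_zero, pentE]
  | succ N ih =>
    rw [prod_range_succ, ih]
    have hrw1 : 2*(N+1) = 2*N+2 := by ring
    have hrw2 : 2*(N+1)+1 = (2*N+1+1)+1 := by ring
    rw [hrw2, hrw1]
    -- expand each gbQ (2N+2)
    have expand : ∀ j ∈ range (2*N+1+1+1),
        gbQ (2*N+2) (j:ℤ) * X ^ pentE ((j:ℤ) - ((N+1:ℕ):ℤ))
        = X ^ (9 * ((2*(N:ℤ)+2 - j).toNat)) * gbQ (2*N) ((j:ℤ)-2) * X ^ pentE ((j:ℤ) - (N:ℤ) - 1)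
          + (1 + X ^ (9*(2*N+1))) * gbQ (2*N) ((j:ℤ)-1) * X ^ pentE ((j:ℤ) - (N:ℤ) - 1)
          + X ^ (9*j) * gbQ (2*N) (j:ℤ) * X ^ pentE ((j:ℤ) - (N:ℤ) - 1) := by
      intro j _
      have harg : ((j:ℤ) - ((N+1:ℕ):ℤ)) = (j:ℤ) - (N:ℤ) - 1 := by push_cast; ring
      rw [harg, gbQ_expand N j]; ring
    rw [Finset.sum_congr rfl expand]
    rw [Finset.sum_add_distrib, Finset.sum_add_distrib]
    have sumA : (∑ j ∈ range (2*N+1+1+1),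
        X ^ (9 * ((2*(N:ℤ)+2 - j).toNat)) * gbQ (2*N) ((j:ℤ)-2) * X ^ pentE ((j:ℤ) - (N:ℤ) - 1))
        = X ^ (9*N+6) * ∑ j ∈ range (2*N+1), gbQ (2*N) (j:ℤ) * X ^ pentE ((j:ℤ) - (N:ℤ)) := by
      rw [Finset.sum_range_succ', Finset.sum_range_succ']
      have k0 : gbQ (2*N) (((0:ℕ):ℤ)-2) = 0 := gbQ_neg _ _ (by norm_num)
      have k1 : gbQ (2*N) (((0+1:ℕ):ℤ)-2) = 0 := gbQ_neg _ _ (by norm_num)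
      rw [k0, k1]
      have key : ∀ x ∈ range (2*N+1),
          X ^ (9 * ((2*(N:ℤ)+2 - ((x+1+1:ℕ):ℤ)).toNat)) * gbQ (2*N) (((x+1+1:ℕ):ℤ)-2) *
            X ^ pentE (((x+1+1:ℕ):ℤ) - (N:ℤ) - 1)
          = X ^ (9*N+6) * (gbQ (2*N) (x:ℤ) * X ^ pentE ((x:ℤ) - (N:ℤ))) := by
        intro x hx
        have hx' : x ≤ 2*N := by
          have := Finset.mem_range.mp hx; omega
        have c1 : ((x+1+1:ℕ):ℤ) - 2 = (x:ℤ) := by push_cast; ring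
        have c2 : ((x+1+1:ℕ):ℤ) - (N:ℤ) - 1 = (x:ℤ) - (N:ℤ) + 1 := by push_cast; ring
        have c3 : ((2*(N:ℤ)+2 - ((x+1+1:ℕ):ℤ)).toNat) = 2*N - x := by push_cast; omega
        rw [c1, c2, c3]
        calc X ^ (9*(2*N-x)) * gbQ (2*N) (x:ℤ) * X ^ pentE ((x:ℤ) - (N:ℤ) + 1)
            = X ^ (9*(2*N-x) + pentE ((x:ℤ) - (N:ℤ) + 1)) * gbQ (2*N) (x:ℤ) := by
              rw [mul_right_comm, ← pow_add]
          _ = X ^ (9*N+6 + pentE ((x:ℤ) - (N:ℤ))) * gbQ (2*N) (x:ℤ) := by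
              rw [pent_up N x hx']
          _ = _ := by rw [pow_add]; ring
      rw [Finset.sum_congr rfl key, ← Finset.mul_sum]
      ring
    have sumB : (∑ j ∈ range (2*N+1+1+1),
        (1 + X ^ (9*(2*N+1))) * gbQ (2*N) ((j:ℤ)-1) * X ^ pentE ((j:ℤ) - (N:ℤ) - 1))
        = (1 + X ^ (9*(2*N+1)))
          * ∑ j ∈ range (2*N+1), gbQ (2*N) (j:ℤ) * X ^ pentE ((j:ℤ) - (N:ℤ)) := by
      rw [Finset.sum_range_succ']
      have k0 : gbQ (2*N) (((0:ℕ):ℤ)-1) = 0 := gbQ_neg _ _ (by norm_num)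
      rw [k0]
      have key : ∀ x ∈ range (2*N+1+1),
          (1 + X ^ (9*(2*N+1))) * gbQ (2*N) (((x+1:ℕ):ℤ)-1) * X ^ pentE (((x+1:ℕ):ℤ) - (N:ℤ) - 1)
          = (1 + X ^ (9*(2*N+1))) * (gbQ (2*N) (x:ℤ) * X ^ pentE ((x:ℤ) - (N:ℤ))) := by
        intro x _
        have c1 : ((x+1:ℕ):ℤ) - 1 = (x:ℤ) := by push_cast; ring
        have c2 : ((x+1:ℕ):ℤ) - (N:ℤ) - 1 = (x:ℤ) - (N:ℤ) := by push_cast; ring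
        rw [c1, c2]; ring
      rw [Finset.sum_congr rfl key, ← Finset.mul_sum, Finset.sum_range_succ]
      have ktop : gbQ (2*N) ((2*N+1:ℕ):ℤ) = 0 := gbQ_gt _ _ (by push_cast; omega)
      rw [ktop]
      ring
    have sumC : (∑ j ∈ range (2*N+1+1+1),
        X ^ (9*j) * gbQ (2*N) (j:ℤ) * X ^ pentE ((j:ℤ) - (N:ℤ) - 1))
        = X ^ (9*N+3) * ∑ j ∈ range (2*N+1), gbQ (2*N) (j:ℤ) * X ^ pentE ((j:ℤ) - (N:ℤ)) := by
      rw [Finset.sum_range_succ, Finset.sum_range_succ]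
      have kt1 : gbQ (2*N) ((2*N+1+1:ℕ):ℤ) = 0 := gbQ_gt _ _ (by push_cast; omega)
      have kt2 : gbQ (2*N) ((2*N+1:ℕ):ℤ) = 0 := gbQ_gt _ _ (by push_cast; omega)
      rw [kt1, kt2]
      have key : ∀ x ∈ range (2*N+1),
          X ^ (9*x) * gbQ (2*N) (x:ℤ) * X ^ pentE ((x:ℤ) - (N:ℤ) - 1)
          = X ^ (9*N+3) * (gbQ (2*N) (x:ℤ) * X ^ pentE ((x:ℤ) - (N:ℤ))) := by
        intro x _
        calc X ^ (9*x) * gbQ (2*N) (x:ℤ) * X ^ pentE ((x:ℤ) - (N:ℤ) - 1)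
            = X ^ (9*x + pentE ((x:ℤ) - (N:ℤ) - 1)) * gbQ (2*N) (x:ℤ) := by
              rw [mul_right_comm, ← pow_add]
          _ = X ^ (9*N+3 + pentE ((x:ℤ) - (N:ℤ))) * gbQ (2*N) (x:ℤ) := by
              rw [pent_down N x]
          _ = _ := by rw [pow_add]; ring
      rw [Finset.sum_congr rfl key, ← Finset.mul_sum]
      ring
    rw [sumA, sumB, sumC]
    have hab : (X:R) ^ (9*N+3) * X ^ (9*N+6) = X ^ (9*(2*N+1)) := by
      rw [← pow_add]; congr 1; ring
    linear_combination (∑ j ∈ range (2*N+1), gbQ (2*N) (j:ℤ) * X ^ pentE ((j:ℤ) - (N:ℤ))) * hab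

end PsiAux2


noncomputable section
namespace PsiAux
open Finset

/-- absorption identity: `(Q;Q)_a · [a+b, a]_Q = ∏_{i<a} (1-Q^{b+1+i})` with `Q = X^9`. -/
lemma absorb : ∀ (a b : ℕ),
    (∏ i ∈ range a, (1 - X^(9*(i+1))) : R) * gbQ (a+b) (a:ℤ)
    = ∏ i ∈ range a, (1 - X^(9*(b+1+i))) := by
  intro a
  induction a with
  | zero => intro b; simp [gbQ_zero]
  | succ a iha =>
    intro b
    induction b with
    | zero =>
      rw [Nat.add_zero, gbQ_diag (a+1)]
      rw [mul_one]
      exact Finset.prod_congr rfl (fun i _ => by rw [Nat.add_comm i 1])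
    | succ b ihb =>
      have hidx : a + 1 + (b + 1) = (a + b + 1) + 1 := by ring
      rw [hidx, gbQ_rule2 (a+b+1) ((a+1:ℕ):ℤ)]
      have e1 : 9 * (((a+b+1:ℕ):ℤ) + 1 - ((a+1:ℕ):ℤ)).toNat = 9*(b+1) := by push_cast; omega
      have e2 : ((a+1:ℕ):ℤ) - 1 = (a:ℤ) := by push_cast; ring
      rw [e1, e2, mul_add]
      have hP : (∏ i ∈ range (a+1), (1 - X^(9*(i+1))) : R)
          = (∏ i ∈ range a, (1 - X^(9*(i+1)))) * (1 - X^(9*(a+1))) := prod_range_succ _ _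
      have hA : (∏ i ∈ range (a+1), (1 - X^(9*(i+1))) : R) * (X ^ (9*(b+1)) * gbQ (a+b+1) (a:ℤ))
          = X ^ (9*(b+1)) * (1 - X^(9*(a+1))) *
            ((∏ i ∈ range a, (1 - X^(9*(i+1)))) * gbQ (a+(b+1)) (a:ℤ)) := by
        rw [hP, show a + (b+1) = a+b+1 from by ring]; ring
      have hB : (∏ i ∈ range (a+1), (1 - X^(9*(i+1))) : R) * gbQ (a+b+1) ((a+1:ℕ):ℤ)
          = ∏ i ∈ range (a+1), (1 - X^(9*(b+1+i))) := by
        rw [show a+b+1 = a+1+b from by ring]; exact ihb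
      rw [hA, iha (b+1), hB]
      -- now pure product identity
      have t1 : (∏ i ∈ range (a+1), (1 - X^(9*(b+1+i))) : R)
          = (1 - X^(9*(b+1))) * ∏ i ∈ range a, (1 - X^(9*(b+1+1+i))) := by
        rw [prod_range_succ' (fun i => (1 - X^(9*(b+1+i)) : R)) a]
        beta_reduce
        have h1 : (∏ i ∈ range a, (1 - X^(9*(b+1+(i+1)))) : R)
            = ∏ i ∈ range a, (1 - X^(9*(b+1+1+i))) :=
          Finset.prod_congr rfl (fun i _ => by congr 2; omega)
        have h0 : 9*(b+1+0) = 9*(b+1) := by omega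
        rw [h0, h1,
          mul_comm (∏ i ∈ range a, (1 - X^(9*(b+1+1+i))) : R) (1 - X^(9*(b+1)))]
      have t2 : (∏ i ∈ range (a+1), (1 - X^(9*(b+1+1+i))) : R)
          = (∏ i ∈ range a, (1 - X^(9*(b+1+1+i)))) * (1 - X^(9*(b+1+1+a))) :=
        prod_range_succ _ _
      rw [t1, t2]
      have hab : (X:R) ^ (9*(b+1)) * X ^ (9*(a+1)) = X ^ (9*(b+1+1+a)) := by
        rw [← pow_add]; congr 1; ring
      linear_combination (- (∏ i ∈ range a, (1 - X^(9*(b+1+1+i))) : R)) * hab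

/-! ### congruence machinery -/

def MD (n : ℕ) (f g : R) : Prop := (X:R)^n ∣ f - g

lemma MD.refl {n : ℕ} (f : R) : MD n f f := by simp [MD]

lemma MD.symm {n : ℕ} {f g : R} (h : MD n f g) : MD n g f := by
  simpa [MD, neg_sub] using h.neg_right

lemma MD.trans {n : ℕ} {f g h : R} (h1 : MD n f g) (h2 : MD n g h) : MD n f h := by
  have := dvd_add h1 h2; simpa [MD] using this

lemma MD.add {n : ℕ} {f g f' g' : R} (h : MD n f g) (h' : MD n f' g') :
    MD n (f + f') (g + g') := by
  have := dvd_add h h'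
  simpa [MD, sub_add_sub_comm] using this

lemma MD.sub {n : ℕ} {f g f' g' : R} (h : MD n f g) (h' : MD n f' g') :
    MD n (f - f') (g - g') := by
  have := dvd_sub h h'
  unfold MD at *
  convert this using 1
  ring

lemma MD.mul {n : ℕ} {f g f' g' : R} (h : MD n f g) (h' : MD n f' g') :
    MD n (f * f') (g * g') := by
  unfold MD at *
  have : f * f' - g * g' = f * (f' - g') + (f - g) * g' := by ring
  rw [this]
  exact dvd_add (Dvd.dvd.mul_left h' f) (Dvd.dvd.mul_right h g')

lemma MD.mul_left {n : ℕ} (c : R) {f g : R} (h : MD n f g) : MD n (c * f) (c * g) :=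
  (MD.refl c).mul h

lemma MD_X_pow {n e : ℕ} (h : n ≤ e) : MD n ((X:R)^e) 0 := by
  unfold MD
  rw [sub_zero]
  exact pow_dvd_pow _ h

lemma MD.sum {n : ℕ} {α : Type} {s : Finset α} {f g : α → R}
    (h : ∀ i ∈ s, MD n (f i) (g i)) : MD n (∑ i ∈ s, f i) (∑ i ∈ s, g i) := by
  classical
  induction s using Finset.induction with
  | empty => simpa using MD.refl 0
  | insert _ _ hx ih =>
    rw [Finset.sum_insert hx, Finset.sum_insert hx]
    exact (h _ (Finset.mem_insert_self _ _)).add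
      (ih (fun i hi => h i (Finset.mem_insert_of_mem hi)))

lemma MD.prod_one {n : ℕ} {α : Type} {s : Finset α} {f : α → R}
    (h : ∀ i ∈ s, MD n (f i) 1) : MD n (∏ i ∈ s, f i) 1 := by
  classical
  induction s using Finset.induction with
  | empty => simpa using MD.refl 1
  | insert _ _ hx ih =>
    rw [Finset.prod_insert hx]
    have := (h _ (Finset.mem_insert_self _ _)).mul
      (ih (fun i hi => h i (Finset.mem_insert_of_mem hi)))
    simpa using this
lemma MD.coeff_eq {n : ℕ} {f g : R} (h : MD (n+1) f g) {i : ℕ} (hi : i ≤ n) :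
    coeff (R := ℤ) i f = coeff (R := ℤ) i g := by
  unfold MD at h
  rw [X_pow_dvd_iff] at h
  have := h i (by omega)
  rw [map_sub] at this
  linarith [this]

end PsiAux

namespace PsiAux
open Finset

/-- extension of sums of monomials: extra high-order terms don't matter -/
lemma MD_sum_extend {n : ℕ} (e : ℕ → ℕ) {M M' : ℕ} (h : M ≤ M')
    (he : ∀ k, M ≤ k → k < M' → n + 1 ≤ e k) :
    MD (n+1) (∑ k ∈ range M', (X:R)^(e k)) (∑ k ∈ range M, (X:R)^(e k)) := by
  induction M' with
  | zero =>
    have : M = 0 := by omega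
    subst this; exact MD.refl _
  | succ M' ih =>
    rcases Nat.lt_or_ge M (M'+1) with hlt | hge
    · have h1 : MD (n+1) (∑ k ∈ range M', (X:R)^(e k)) (∑ k ∈ range M, (X:R)^(e k)) :=
        ih (by omega) (fun k hk hk' => he k hk (by omega))
      have h2 : MD (n+1) ((X:R)^(e M')) 0 := MD_X_pow (he M' (by omega) (by omega))
      rw [sum_range_succ]
      have := h1.add h2
      rw [add_zero] at this
      exact this
    · have : M = M' + 1 := by omega
      subst this; exact MD.refl _

lemma MD_one_sub_pow {n e : ℕ} (h : n+1 ≤ e) : MD (n+1) (1 - (X:R)^e) 1 := by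
  unfold MD
  have : (1 - (X:R)^e) - 1 = -X^e := by ring
  rw [this]
  exact (pow_dvd_pow _ h).neg_right

lemma MD_one_add_pow {n e : ℕ} (h : n+1 ≤ e) : MD (n+1) (1 + (X:R)^e) 1 := by
  unfold MD
  have : (1 + (X:R)^e) - 1 = X^e := by ring
  rw [this]
  exact pow_dvd_pow _ h

lemma MD_prod_extend {n : ℕ} (F : ℕ → R) {M M' : ℕ} (h : M ≤ M')
    (he : ∀ k, M ≤ k → k < M' → MD (n+1) (F k) 1) :
    MD (n+1) (∏ k ∈ range M', F k) (∏ k ∈ range M, F k) := by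
  induction M' with
  | zero =>
    have : M = 0 := by omega
    subst this; exact MD.refl _
  | succ M' ih =>
    rcases Nat.lt_or_ge M (M'+1) with hlt | hge
    · have h1 := ih (by omega) (fun k hk hk' => he k hk (by omega))
      have h2 := he M' (by omega) (by omega)
      rw [prod_range_succ]
      have := h1.mul h2
      rw [mul_one] at this
      exact this
    · have : M = M' + 1 := by omega
      subst this; exact MD.refl _

lemma two_tri (k : ℕ) : 2 * (k * (k+1) / 2) = k * (k+1) := by
  have : 2 ∣ k * (k+1) := (Nat.even_mul_succ_self k).two_dvd
  omega

lemma tri_ge (k : ℕ) : k ≤ k * (k+1) / 2 := by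
  rcases Nat.eq_zero_or_pos k with h0 | h0
  · subst h0; norm_num
  · have h3 : k * 2 ≤ k * (k+1) := Nat.mul_le_mul_left k (by omega)
    have h4 := Nat.div_le_div_right (c := 2) h3
    simpa using h4

lemma tri_inj {k l : ℕ} (h : k * (k+1) / 2 = l * (l+1) / 2) : k = l := by
  have h1 := two_tri k
  have h2 := two_tri l
  rcases Nat.lt_trichotomy k l with hlt | he | hlt
  · have : k * (k+1) < l * (l+1) := by
      calc k * (k+1) < (k+1) * (k+2) := by nlinarith
        _ ≤ l * (l+1) := Nat.mul_le_mul (by omega) (by omega)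
    omega
  · exact he
  · have : l * (l+1) < k * (k+1) := by
      calc l * (l+1) < (l+1) * (l+2) := by nlinarith
        _ ≤ k * (k+1) := Nat.mul_le_mul (by omega) (by omega)
    omega

lemma pentE_nat (u : ℕ) : 2 * pentE ((u:ℕ):ℤ) = 3 * (u * (3*u+1)) := by
  have h := two_pentE ((u:ℕ):ℤ)
  have e2 : (((u * (3*u+1) : ℕ)) : ℤ) = ((u:ℕ):ℤ) * (3*((u:ℕ):ℤ)+1) := by push_cast; ring
  omega

lemma pentE_negnat (u : ℕ) : 2 * pentE (-((u:ℤ)+1)) = 3 * ((u+1) * (3*u+2)) := by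
  have h := two_pentE (-((u:ℤ)+1))
  have e : ((-((u:ℤ)+1)) * (3*(-((u:ℤ)+1))+1)) = ((u:ℤ)+1) * (3*(u:ℤ)+2) := by ring
  rw [e] at h
  have e2 : (((u:ℤ)+1) * (3*(u:ℤ)+2)).toNat = (u+1) * (3*u+2) := by
    have : (((u+1) * (3*u+2) : ℕ) : ℤ) = ((u:ℤ)+1) * (3*(u:ℤ)+2) := by push_cast; ring
    omega
  rw [e2] at h
  exact h

lemma pent_lb (m : ℤ) : 3 * m.natAbs ≤ pentE m := by
  have h := two_pentE m
  have hge : 2 * (m.natAbs : ℤ) ≤ m * (3*m+1) := by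
    rcases Int.natAbs_eq m with he | he
    · set a : ℤ := (m.natAbs : ℤ) with ha
      have ha0 : 0 ≤ a := Int.natCast_nonneg _
      rw [he]
      rcases eq_or_lt_of_le ha0 with h0 | h0
      · rw [← h0]; norm_num
      · nlinarith
    · set a : ℤ := (m.natAbs : ℤ) with ha
      have ha0 : 0 ≤ a := Int.natCast_nonneg _
      rw [he]
      rcases eq_or_lt_of_le ha0 with h0 | h0
      · rw [← h0]; norm_num
      · nlinarith
  have h0 := (pent_core m).1
  omega

end PsiAux

noncomputable section
namespace PsiAux
open Finset

set_option maxHeartbeats 1000000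

lemma coeff_prod_stable (j i : ℕ) (hj : 1 ≤ j) :
    ∀ M, i + 1 ≤ M → coeff (R := ℤ) i (∏ k ∈ range M, (1 - X^(j*(k+1))) : R)
      = coeff (R := ℤ) i (∏ k ∈ range (i+1), (1 - X^(j*(k+1))) : R) := by
  intro M
  induction M with
  | zero => intro h; omega
  | succ M ih =>
    intro hM
    rcases Nat.lt_or_ge (i+1) (M+1) with h | h
    · rw [prod_range_succ, mul_sub, mul_one, map_sub]
      have hdvd : (X:R)^(i+1) ∣ (∏ k ∈ range M, (1 - X^(j*(k+1)))) * X^(j*(M+1)) := by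
        apply Dvd.dvd.mul_left
        apply pow_dvd_pow
        calc i+1 ≤ M+1 := by omega
          _ ≤ j*(M+1) := Nat.le_mul_of_pos_left _ hj
      rw [X_pow_dvd_iff] at hdvd
      rw [hdvd i (by omega), sub_zero]
      exact ih (by omega)
    · have he : M + 1 = i + 1 := by omega
      rw [he]

lemma euler_trunc (j n : ℕ) (hj : 1 ≤ j) :
    MD (n+1) (eulerSub j) (∏ k ∈ range (n+1), (1 - X^(j*(k+1)))) := by
  unfold MD
  rw [X_pow_dvd_iff]
  intro i hi
  rw [map_sub]
  have h1 : coeff (R := ℤ) i (eulerSub j) = coeff (R := ℤ) i (∏ k ∈ range (i+1), (1 - X^(j*(k+1)))) := by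
    simp [eulerSub, coeff_mk]
  rw [h1, coeff_prod_stable j i hj (n+1) (by omega)]
  ring

lemma euler_const (j : ℕ) (hj : 1 ≤ j) : constantCoeff (R := ℤ) (eulerSub j) = 1 := by
  rw [← coeff_zero_eq_constantCoeff_apply]
  have h1 : coeff (R := ℤ) 0 (eulerSub j) = coeff (R := ℤ) 0 (∏ k ∈ range 1, (1 - (X:R)^(j*(k+1)))) := by
    simp [eulerSub, coeff_mk]
  rw [h1, prod_range_one]
  rw [map_sub, coeff_X_pow]
  rw [if_neg (by omega : ¬ (0 = j * 1))]
  simp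

lemma psi_trunc (j n : ℕ) (hj : 1 ≤ j) :
    MD (n+1) (psiSub j) (∑ k ∈ range (n+1), (X:R)^(j * (k*(k+1)/2))) := by
  classical
  unfold MD
  rw [X_pow_dvd_iff]
  intro i hi
  rw [map_sub]
  have h1 : coeff (R := ℤ) i (psiSub j) = if ∃ k, j * (k*(k+1)/2) = i then 1 else 0 := by
    simp [psiSub, coeff_mk]
  have h2 : coeff (R := ℤ) i (∑ k ∈ range (n+1), (X:R)^(j * (k*(k+1)/2)))
      = ∑ k ∈ range (n+1), if i = j * (k*(k+1)/2) then (1:ℤ) else 0 := by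
    rw [map_sum]
    exact Finset.sum_congr rfl (fun k _ => coeff_X_pow i _)
  have h3 : (if ∃ k, j * (k*(k+1)/2) = i then (1:ℤ) else 0)
      = ∑ k ∈ range (n+1), if i = j * (k*(k+1)/2) then (1:ℤ) else 0 := by
    by_cases hex : ∃ k, j * (k*(k+1)/2) = i
    · obtain ⟨k0, hk0⟩ := hex
      rw [if_pos ⟨k0, hk0⟩]
      have hk0mem : k0 ∈ range (n+1) := by
        have t1 := tri_ge k0
        have t2 : k0*(k0+1)/2 ≤ j * (k0*(k0+1)/2) := Nat.le_mul_of_pos_left _ hj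
        exact mem_range.mpr (by omega)
      rw [Finset.sum_eq_single k0]
      · rw [if_pos hk0.symm]
      · intro b _ hb
        rw [if_neg]
        intro hcon
        exact hb (tri_inj (Nat.eq_of_mul_eq_mul_left hj (by omega))).symm
      · intro hcon; exact absurd hk0mem hcon
    · rw [if_neg hex]
      refine (Finset.sum_eq_zero ?_).symm
      intro k _
      rw [if_neg (fun hcon => hex ⟨k, hcon.symm⟩)]
  rw [h1, h2, ← h3, sub_self]

lemma T31 (u : ℕ) : (3*u+1) * ((3*u+1)+1) / 2 = 1 + 9 * (u*(u+1)/2) := by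
  have h1 := two_tri (3*u+1)
  have h2 := two_tri u
  have e : (3*u+1) * ((3*u+1)+1) = 9*(u*(u+1)) + 2 := by ring
  omega

lemma T30 (u : ℕ) : (3*u) * ((3*u)+1) / 2 = pentE ((u:ℕ):ℤ) := by
  have h1 := two_tri (3*u)
  have h2 := pentE_nat u
  have e : (3*u) * ((3*u)+1) = 3 * (u*(3*u+1)) := by ring
  omega

lemma T32 (u : ℕ) : (3*u+2) * ((3*u+2)+1) / 2 = pentE (-((u:ℤ)+1)) := by
  have h1 := two_tri (3*u+2)
  have h2 := pentE_negnat u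
  have e : (3*u+2) * ((3*u+2)+1) = 3 * ((u+1)*(3*u+2)) := by ring
  omega

lemma step1 (n : ℕ) :
    MD (n+1) (psiSub 1 - X * psiSub 9)
      (∑ j ∈ range (2*n+3), (X:R) ^ pentE ((j:ℤ) - ((n+1:ℕ):ℤ))) := by
  have hψ1 : MD (n+1) (psiSub 1) (∑ k ∈ range (n+1), (X:R)^(k*(k+1)/2)) := by
    have h := psi_trunc 1 n le_rfl
    simpa [one_mul] using h
  have hext : MD (n+1) (∑ k ∈ range (3*n+4), (X:R)^(k*(k+1)/2))
      (∑ k ∈ range (n+1), (X:R)^(k*(k+1)/2)) := by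
    apply MD_sum_extend _ (by omega)
    intro k hk hk'
    calc n+1 ≤ k := hk
      _ ≤ k*(k+1)/2 := tri_ge k
  have hψ1' : MD (n+1) (psiSub 1) (∑ k ∈ range (3*n+4), (X:R)^(k*(k+1)/2)) :=
    hψ1.trans hext.symm
  have hA : ∑ k ∈ (range (3*n+4)).filter (fun k => k % 3 = 1), (X:R)^(k*(k+1)/2)
      = ∑ r ∈ range (n+1), (X:R)^(1 + 9*(r*(r+1)/2)) := by
    apply Finset.sum_nbij' (i := fun k => k/3) (j := fun r => 3*r+1)
    · intro k hk
      simp only [mem_filter, mem_range] at hk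
      exact mem_range.mpr (by omega)
    · intro r hr
      simp only [mem_range] at hr
      simp only [mem_filter, mem_range]
      omega
    · intro k hk
      simp only [mem_filter, mem_range] at hk
      omega
    · intro r hr
      omega
    · intro k hk
      simp only [mem_filter, mem_range] at hk
      obtain ⟨u, hu⟩ : ∃ u, k = 3*u+1 := ⟨k/3, by omega⟩
      subst hu
      have hdiv : (3*u+1)/3 = u := by omega
      rw [hdiv, T31 u]
  have hB : ∑ k ∈ (range (3*n+4)).filter (fun k => ¬ k % 3 = 1), (X:R)^(k*(k+1)/2)
      = ∑ j ∈ range (2*n+3), (X:R) ^ pentE ((j:ℤ) - ((n+1:ℕ):ℤ)) := by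
    apply Finset.sum_nbij'
      (i := fun k => if k % 3 = 0 then (n+1) + k/3 else (n+1) - (k+1)/3)
      (j := fun jj => if (n+1) ≤ jj then 3*(jj - (n+1)) else 3*((n+1) - jj) - 1)
    · intro k hk
      simp only [mem_filter, mem_range] at hk
      simp only [mem_range]
      split_ifs <;> omega
    · intro jj hjj
      simp only [mem_range] at hjj
      simp only [mem_filter, mem_range]
      split_ifs <;> omega
    · intro k hk
      simp only [mem_filter, mem_range] at hk
      split_ifs <;> omega
    · intro jj hjj
      simp only [mem_range] at hjj
      split_ifs <;> omega
    · intro k hk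
      simp only [mem_filter, mem_range] at hk
      rcases (by omega : k % 3 = 0 ∨ k % 3 = 2) with h0 | h2
      · obtain ⟨u, hu⟩ : ∃ u, k = 3*u := ⟨k/3, by omega⟩
        subst hu
        rw [if_pos (by omega)]
        have hdiv : 3*u/3 = u := by omega
        rw [hdiv]
        have harg : (((n+1) + u : ℕ) : ℤ) - ((n+1:ℕ):ℤ) = ((u:ℕ):ℤ) := by push_cast; ring
        rw [harg, ← T30 u]
      · obtain ⟨u, hu⟩ : ∃ u, k = 3*u+2 := ⟨k/3, by omega⟩
        subst hu
        rw [if_neg (by omega)]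
        have hdiv : (3*u+2+1)/3 = u+1 := by omega
        rw [hdiv]
        have hun : u ≤ n := by omega
        have harg : (((n+1) - (u+1) : ℕ) : ℤ) - ((n+1:ℕ):ℤ) = -((u:ℤ)+1) := by
          have : ((n+1) - (u+1) : ℕ) = n - u := by omega
          rw [this]
          have h2 : ((n - u : ℕ) : ℤ) = (n:ℤ) - u := by omega
          rw [h2]
          push_cast
          ring
        rw [harg, ← T32 u]
  have hsplit : (∑ k ∈ range (3*n+4), (X:R)^(k*(k+1)/2))
      = (∑ j ∈ range (2*n+3), (X:R) ^ pentE ((j:ℤ) - ((n+1:ℕ):ℤ)))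
        + ∑ r ∈ range (n+1), (X:R)^(1 + 9*(r*(r+1)/2)) := by
    rw [← Finset.sum_filter_add_sum_filter_not (range (3*n+4)) (fun k => k % 3 = 1)]
    rw [hA, hB]
    ring
  have hψ9 : MD (n+1) (X * psiSub 9) (∑ r ∈ range (n+1), (X:R)^(1 + 9*(r*(r+1)/2))) := by
    have h9 := psi_trunc 9 n (by norm_num)
    have hm := (MD.refl (n := n+1) (X:R)).mul h9
    have he : (X:R) * (∑ k ∈ range (n+1), (X:R)^(9 * (k*(k+1)/2)))
        = ∑ r ∈ range (n+1), (X:R)^(1 + 9*(r*(r+1)/2)) := by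
      rw [Finset.mul_sum]
      exact Finset.sum_congr rfl (fun k _ => by rw [pow_add, pow_one])
    rw [he] at hm
    exact hm
  have hfinal := hψ1'.sub hψ9
  rw [hsplit] at hfinal
  simpa [add_sub_cancel_right] using hfinal

lemma step2 (n : ℕ) :
    MD (n+1) (∑ j ∈ range (2*n+3), (X:R) ^ pentE ((j:ℤ) - ((n+1:ℕ):ℤ)))
      ((∏ k ∈ range (n+1), (1 - X^(9*(k+1)))) *
       (∏ i ∈ range (n+1), ((1 + X^(9*i+3)) * (1 + X^(9*i+6))))) := by
  have hf := PsiAux2.fjtp (n+1)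
  rw [show 2*(n+1)+1 = 2*n+3 from by ring, show 2*(n+1) = 2*n+2 from by ring] at hf
  rw [hf, Finset.mul_sum]
  apply MD.sum
  intro j hj
  have hjr : j < 2*n+3 := mem_range.mp hj
  by_cases hp : pentE ((j:ℤ) - ((n+1:ℕ):ℤ)) ≤ n
  · have habs : 3 * ((j:ℤ) - ((n+1:ℕ):ℤ)).natAbs ≤ n := le_trans (pent_lb _) hp
    set m := ((j:ℤ) - ((n+1:ℕ):ℤ)).natAbs with hm
    have hjb : n+1-m ≤ j ∧ j ≤ n+1+m := by
      constructor <;> omega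
    have key : MD (n+1) ((∏ k ∈ range (n+1), (1 - (X:R)^(9*(k+1)))) * gbQ (2*n+2) (j:ℤ)) 1 := by
      have hPj : MD (n+1) (∏ k ∈ range (n+1), (1 - (X:R)^(9*(k+1))))
          (∏ k ∈ range j, (1 - (X:R)^(9*(k+1)))) := by
        rcases le_total (n+1) j with hc | hc
        · exact (MD_prod_extend _ hc (fun k hk hk' => MD_one_sub_pow (by omega))).symm
        · exact MD_prod_extend _ hc (fun k hk hk' => MD_one_sub_pow (by omega))
      have habs2 : (∏ k ∈ range j, (1 - (X:R)^(9*(k+1)))) * gbQ (j + (2*n+2-j)) (j:ℤ)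
          = ∏ i ∈ range j, (1 - X^(9*((2*n+2-j)+1+i))) := absorb j (2*n+2-j)
      rw [show j + (2*n+2-j) = 2*n+2 from by omega] at habs2
      have htail : MD (n+1) (∏ i ∈ range j, (1 - (X:R)^(9*((2*n+2-j)+1+i)))) 1 :=
        MD.prod_one (fun i _ => MD_one_sub_pow (by omega))
      have t := hPj.mul (MD.refl (gbQ (2*n+2) (j:ℤ)))
      rw [habs2] at t
      exact t.trans htail
    have t2 := key.mul (MD.refl ((X:R) ^ pentE ((j:ℤ) - ((n+1:ℕ):ℤ))))
    rw [one_mul, mul_assoc] at t2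
    exact t2.symm
  · have h0 : MD (n+1) ((X:R) ^ pentE ((j:ℤ) - ((n+1:ℕ):ℤ))) 0 := MD_X_pow (by omega)
    have h1 : MD (n+1) ((∏ k ∈ range (n+1), (1 - (X:R)^(9*(k+1)))) *
        (gbQ (2*n+2) (j:ℤ) * X ^ pentE ((j:ℤ) - ((n+1:ℕ):ℤ)))) 0 := by
      unfold MD
      rw [sub_zero]
      exact Dvd.dvd.mul_left (Dvd.dvd.mul_left (pow_dvd_pow _ (by omega)) _) _
    exact h0.trans h1.symm

lemma I1 (n : ℕ) : (∏ k ∈ range (n+1), (1 - (X:R)^(6*(k+1))))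
    = (∏ k ∈ range (n+1), (1 - X^(3*(k+1)))) * (∏ k ∈ range (n+1), (1 + X^(3*(k+1)))) := by
  rw [← Finset.prod_mul_distrib]
  refine Finset.prod_congr rfl (fun k _ => ?_)
  have e : (X:R)^(6*(k+1)) = X^(3*(k+1)) * X^(3*(k+1)) := by
    rw [← pow_add]; congr 1; ring
  rw [e]; ring

lemma I3 (n : ℕ) : (∏ k ∈ range (n+1), (1 - (X:R)^(18*(k+1))))
    = (∏ k ∈ range (n+1), (1 - X^(9*(k+1)))) * (∏ k ∈ range (n+1), (1 + X^(9*(k+1)))) := by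
  rw [← Finset.prod_mul_distrib]
  refine Finset.prod_congr rfl (fun k _ => ?_)
  have e : (X:R)^(18*(k+1)) = X^(9*(k+1)) * X^(9*(k+1)) := by
    rw [← pow_add]; congr 1; ring
  rw [e]; ring

lemma I2 : ∀ (M : ℕ), (∏ k ∈ range (3*M), (1 + (X:R)^(3*(k+1))))
    = (∏ i ∈ range M, ((1 + (X:R)^(9*i+3)) * (1 + X^(9*i+6)))) *
      ∏ i ∈ range M, (1 + (X:R)^(9*(i+1))) := by
  intro M
  induction M with
  | zero => simp
  | succ M ih =>
    rw [show 3*(M+1) = 3*M+1+1+1 from by ring, prod_range_succ, prod_range_succ,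
      prod_range_succ, ih, prod_range_succ, prod_range_succ]
    have a1 : 3*(3*M+1) = 9*M+3 := by ring
    have a2 : 3*(3*M+1+1) = 9*M+6 := by ring
    have a3 : 3*(3*M+1+1+1) = 9*(M+1) := by ring
    rw [a1, a2, a3]
    ring

lemma keyCD (n : ℕ) :
    MD (n+1) ((∏ i ∈ range (n+1), ((1 + (X:R)^(9*i+3)) * (1 + X^(9*i+6)))) *
        (∏ i ∈ range (n+1), (1 + (X:R)^(9*(i+1)))))
      (∏ k ∈ range (n+1), (1 + (X:R)^(3*(k+1)))) := by
  rw [← I2 (n+1)]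
  exact MD_prod_extend _ (by omega) (fun k hk hk' => MD_one_add_pow (by omega))

lemma core (n : ℕ) :
    MD (n+1) ((psiSub 1 - X * psiSub 9) * (eulerSub 3 * eulerSub 18))
      (eulerSub 6 * eulerSub 9 ^ 2) := by
  have h1 := step1 n
  have h2 := euler_trunc 3 n (by norm_num)
  have h2' := euler_trunc 18 n (by norm_num)
  have h6 := euler_trunc 6 n (by norm_num)
  have h9 := euler_trunc 9 n (by norm_num)
  have hB2 := step2 n
  have c1 := h1.mul (h2.mul h2')
  have c2 := hB2.mul (MD.refl ((∏ k ∈ range (n+1), (1 - (X:R)^(3*(k+1)))) *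
      (∏ k ∈ range (n+1), (1 - (X:R)^(18*(k+1))))))
  have c12 := c1.trans c2
  have c3 : ((∏ k ∈ range (n+1), (1 - (X:R)^(9*(k+1)))) *
        (∏ i ∈ range (n+1), ((1 + (X:R)^(9*i+3)) * (1 + X^(9*i+6))))) *
      ((∏ k ∈ range (n+1), (1 - (X:R)^(3*(k+1)))) *
        (∏ k ∈ range (n+1), (1 - (X:R)^(18*(k+1)))))
      = ((∏ k ∈ range (n+1), (1 - (X:R)^(3*(k+1)))) *
          (∏ k ∈ range (n+1), (1 - (X:R)^(9*(k+1))))^2) *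
        ((∏ i ∈ range (n+1), ((1 + (X:R)^(9*i+3)) * (1 + X^(9*i+6)))) *
          (∏ i ∈ range (n+1), (1 + (X:R)^(9*(i+1))))) := by
    rw [I3 n]; ring
  rw [c3] at c12
  have c4 := (MD.refl ((∏ k ∈ range (n+1), (1 - (X:R)^(3*(k+1)))) *
      (∏ k ∈ range (n+1), (1 - (X:R)^(9*(k+1))))^2)).mul (keyCD n)
  have c14 := c12.trans c4
  have c5 : ((∏ k ∈ range (n+1), (1 - (X:R)^(3*(k+1)))) *
        (∏ k ∈ range (n+1), (1 - (X:R)^(9*(k+1))))^2) *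
      (∏ k ∈ range (n+1), (1 + (X:R)^(3*(k+1))))
      = (∏ k ∈ range (n+1), (1 - (X:R)^(6*(k+1)))) *
        (∏ k ∈ range (n+1), (1 - (X:R)^(9*(k+1))))^2 := by
    rw [I1 n]; ring
  rw [c5] at c14
  have c7 : MD (n+1) (eulerSub 6 * eulerSub 9 ^ 2)
      ((∏ k ∈ range (n+1), (1 - (X:R)^(6*(k+1)))) *
        (∏ k ∈ range (n+1), (1 - (X:R)^(9*(k+1))))^2) := by
    have := h6.mul (h9.mul h9)
    rw [show (eulerSub 9) * (eulerSub 9) = eulerSub 9 ^ 2 from (sq (eulerSub 9)).symm,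
      show (∏ k ∈ range (n+1), (1 - (X:R)^(9*(k+1)))) * (∏ k ∈ range (n+1), (1 - (X:R)^(9*(k+1))))
        = (∏ k ∈ range (n+1), (1 - (X:R)^(9*(k+1))))^2 from (sq _).symm] at this
    exact this
  exact c14.trans c7.symm

end PsiAux
end

theorem psi_three_dissection :
    psiSub 1 = ASub 3 + PowerSeries.X * psiSub 9 := by
  have key : (psiSub 1 - PowerSeries.X * psiSub 9) * (eulerSub 3 * eulerSub 18)
      = eulerSub 6 * eulerSub 9 ^ 2 := by
    ext n
    exact (PsiAux.core n).coeff_eq le_rfl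
  have hc : constantCoeff (R := ℤ) (eulerSub 3 * eulerSub 18) = 1 := by
    rw [map_mul, PsiAux.euler_const 3 (by norm_num), PsiAux.euler_const 18 (by norm_num)]
    ring
  have hinv : (eulerSub 3 * eulerSub 18) * PowerSeries.invOfUnit (eulerSub 3 * eulerSub 18) 1
      = 1 := PowerSeries.mul_invOfUnit _ 1 (by rw [hc]; simp)
  have hA : ASub 3 = psiSub 1 - PowerSeries.X * psiSub 9 := by
    unfold ASub
    norm_num
    calc eulerSub 6 * eulerSub 9 ^ 2 * PowerSeries.invOfUnit (eulerSub 3 * eulerSub 18) 1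
        = ((psiSub 1 - PowerSeries.X * psiSub 9) * (eulerSub 3 * eulerSub 18)) *
          PowerSeries.invOfUnit (eulerSub 3 * eulerSub 18) 1 := by rw [key]
      _ = (psiSub 1 - PowerSeries.X * psiSub 9) *
          ((eulerSub 3 * eulerSub 18) * PowerSeries.invOfUnit (eulerSub 3 * eulerSub 18) 1) := by
          ring
      _ = psiSub 1 - PowerSeries.X * psiSub 9 := by rw [hinv, mul_one]
  rw [hA]
  ring
end
end
end

section
/- With A(q) = (q^2;q^2)_∞ (q^3;q^3)_∞^2 / ((q;q)_∞ (q^6;q^6)_∞) and ψ(q) = Σ_{n≥0} q^{n(n+1)/2}, one has A(q^3)^3 + q^3 ψ(q^9)^3 = ψ(q^3)^4 / ψ(q^9). -/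
open PowerSeries

open Finset

noncomputable section
namespace JTPaux

variable {R : Type*} [CommRing R]

variable {R : Type*} [CommRing R]

/-- limit of partial products -/
def plim (g : ℕ → PowerSeries R) : PowerSeries R :=
  PowerSeries.mk fun n => coeff (R := R) n (∏ k ∈ range (n+1), g k)

/-- each factor `g k` agrees with 1 up to coefficient `k` -/
def Reg (g : ℕ → PowerSeries R) : Prop :=
  ∀ k n, n ≤ k → coeff (R := R) n (g k) = coeff (R := R) n (1 : PowerSeries R)

lemma Reg.mul {g h : ℕ → PowerSeries R} (hg : Reg g) (hh : Reg h) :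
    Reg (fun k => g k * h k) := by
  intro k n hn
  rw [coeff_mul]
  have : ∀ p ∈ antidiagonal n, coeff (R := R) p.1 (g k) * coeff (R := R) p.2 (h k)
      = coeff (R := R) p.1 (1 : PowerSeries R) * coeff (R := R) p.2 (1 : PowerSeries R) := by
    intro p hp
    rw [HasAntidiagonal.mem_antidiagonal] at hp
    rw [hg k p.1 (by omega), hh k p.2 (by omega)]
  rw [Finset.sum_congr rfl this, ← coeff_mul, one_mul]

lemma reg_of_factor {c : ℕ → R} {e : ℕ → ℕ} (he : ∀ k, k < e k) :
    Reg (fun k => 1 + (C (R := R) (c k)) * (X:PowerSeries R) ^ (e k)) := by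
  intro k n hn
  have hek := he k
  rw [map_add, coeff_C_mul, coeff_X_pow, if_neg (by omega)]
  ring

lemma prod_coeff_stable {g : ℕ → PowerSeries R} (hg : Reg g) :
    ∀ {n m m'}, n ≤ m → m ≤ m' →
      coeff (R := R) n (∏ k ∈ range m', g k) = coeff (R := R) n (∏ k ∈ range m, g k) := by
  intro n m m' hnm hmm'
  induction m' with
  | zero =>
    have : m = 0 := by omega
    subst this; rfl
  | succ M ih =>
    rcases Nat.lt_or_ge m (M+1) with h | h
    · have hM : m ≤ M := by omega
      rw [prod_range_succ, coeff_mul]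
      have : ∀ p ∈ antidiagonal n, coeff (R := R) p.1 (∏ k ∈ range M, g k) * coeff (R := R) p.2 (g M)
          = coeff (R := R) p.1 (∏ k ∈ range M, g k) * coeff (R := R) p.2 (1:PowerSeries R) := by
        intro p hp
        rw [HasAntidiagonal.mem_antidiagonal] at hp
        rw [hg M p.2 (by omega)]
      rw [Finset.sum_congr rfl this, ← coeff_mul, mul_one, ih hM]
    · have : m = M + 1 := by omega
      subst this; rfl

lemma coeff_plim {g : ℕ → PowerSeries R} (hg : Reg g) {n m : ℕ} (h : n ≤ m) :
    coeff (R := R) n (plim g) = coeff (R := R) n (∏ k ∈ range m, g k) := by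
  rw [plim, coeff_mk]
  rcases Nat.lt_or_ge m (n+1) with hm | hm
  · exact prod_coeff_stable hg h (by omega)
  · exact (prod_coeff_stable hg (by omega : n ≤ n+1) hm).symm

lemma plim_one : plim (fun _ => (1:PowerSeries R)) = 1 := by
  ext n
  rw [plim, coeff_mk, prod_const_one]

lemma plim_mul {g h : ℕ → PowerSeries R} (hg : Reg g) (hh : Reg h) :
    plim g * plim h = plim (fun k => g k * h k) := by
  ext n
  rw [coeff_mul]
  have : ∀ p ∈ antidiagonal n, coeff (R := R) p.1 (plim g) * coeff (R := R) p.2 (plim h)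
      = coeff (R := R) p.1 (∏ k ∈ range n, g k) * coeff (R := R) p.2 (∏ k ∈ range n, h k) := by
    intro p hp
    rw [HasAntidiagonal.mem_antidiagonal] at hp
    rw [coeff_plim hg (by omega : p.1 ≤ n), coeff_plim hh (by omega : p.2 ≤ n)]
  rw [Finset.sum_congr rfl this, ← coeff_mul, ← prod_mul_distrib,
    coeff_plim (hg.mul hh) (le_refl n)]

/-- main comparison tool: two products of plims agree if suitable partial products agree -/
lemma plim_mul_eq_plim_mul {g h g' h' : ℕ → PowerSeries R}
    (hg : Reg g) (hh : Reg h) (hg' : Reg g') (hh' : Reg h')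
    (key : ∀ n, ∃ m1 m2 m3 m4, n ≤ m1 ∧ n ≤ m2 ∧ n ≤ m3 ∧ n ≤ m4 ∧
      (∏ k ∈ range m1, g k) * (∏ k ∈ range m2, h k)
        = (∏ k ∈ range m3, g' k) * (∏ k ∈ range m4, h' k)) :
    plim g * plim h = plim g' * plim h' := by
  ext n
  obtain ⟨m1, m2, m3, m4, h1, h2, h3, h4, hkey⟩ := key n
  have expand : ∀ (a b : ℕ → PowerSeries R) (ha : Reg a) (hb : Reg b) (ma mb : ℕ),
      n ≤ ma → n ≤ mb →
      coeff (R := R) n (plim a * plim b)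
        = coeff (R := R) n ((∏ k ∈ range ma, a k) * (∏ k ∈ range mb, b k)) := by
    intro a b ha hb ma mb hma hmb
    rw [coeff_mul, coeff_mul]
    refine Finset.sum_congr rfl ?_
    intro p hp
    rw [HasAntidiagonal.mem_antidiagonal] at hp
    rw [coeff_plim ha (by omega : p.1 ≤ ma), coeff_plim hb (by omega : p.2 ≤ mb)]
  rw [expand g h hg hh m1 m2 h1 h2, expand g' h' hg' hh' m3 m4 h3 h4, hkey]



/-! ### Triangular numbers over ℤ and the exponent function -/

def TT (i : ℤ) : ℕ := (i * (i + 1)).toNat / 2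

lemma TT_cast (i : ℤ) : (TT i : ℤ) * 2 = i * (i + 1) := by
  have h0 : 0 ≤ i * (i + 1) := by nlinarith [sq_nonneg (2*i+1)]
  have h1 : i * (i + 1) % 2 = 0 := Int.even_iff.mp (Int.even_mul_succ_self i)
  unfold TT
  omega

def eex (a b : ℕ) (i : ℤ) : ℕ := a * TT i + b * TT (-i)

lemma eex_cast (a b : ℕ) (i : ℤ) :
    (eex a b i : ℤ) * 2 = a * (i * (i + 1)) + b * (i * (i - 1)) := by
  unfold eex
  push_cast
  linear_combination (a : ℤ) * TT_cast i + (b : ℤ) * TT_cast (-i)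

lemma eshift1 (a b : ℕ) (N : ℕ) (i : ℤ) (hi : i ≤ (N:ℤ) + 1) :
    eex a b (i-1) + a + (a+b) * N = eex a b i + (a+b) * ((N:ℤ)+1-i).toNat := by
  have key : ((eex a b (i-1) + a + (a+b) * N : ℕ) : ℤ) * 2
      = ((eex a b i + (a+b) * ((N:ℤ)+1-i).toNat : ℕ) : ℤ) * 2 := by
    push_cast [Int.toNat_of_nonneg (by omega : (0:ℤ) ≤ (N:ℤ)+1-i)]
    linear_combination eex_cast a b (i-1) - eex_cast a b i
  omega

lemma eshift2 (a b : ℕ) (N : ℕ) (i : ℤ) (hi : -((N:ℤ)+1) ≤ i) :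
    eex a b (i+1) + b + (a+b) * N = eex a b i + (a+b) * ((N:ℤ)+1+i).toNat := by
  have key : ((eex a b (i+1) + b + (a+b) * N : ℕ) : ℤ) * 2
      = ((eex a b i + (a+b) * ((N:ℤ)+1+i).toNat : ℕ) : ℤ) * 2 := by
    push_cast [Int.toNat_of_nonneg (by omega : (0:ℤ) ≤ (N:ℤ)+1+i)]
    linear_combination eex_cast a b (i+1) - eex_cast a b i
  omega

lemma eabs (a b : ℕ) (ha : 1 ≤ a) (hb : 1 ≤ b) (i : ℤ) : i.natAbs ≤ eex a b i := by
  have h := eex_cast a b i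
  have hna : (i.natAbs : ℤ) * (i.natAbs : ℤ) = i * i := by
    exact_mod_cast Int.natAbs_mul_self (a := i)
  have hp1 : 0 ≤ i * (i + 1) := by nlinarith [sq_nonneg (2*i+1)]
  have hp2 : 0 ≤ i * (i - 1) := by nlinarith [sq_nonneg (2*i-1)]
  have ha' : (1:ℤ) ≤ (a:ℤ) := by exact_mod_cast ha
  have hb' : (1:ℤ) ≤ (b:ℤ) := by exact_mod_cast hb
  have hnn : (0:ℤ) ≤ (i.natAbs : ℤ) := Int.natCast_nonneg _
  have : (i.natAbs : ℤ) ≤ (eex a b i : ℤ) := by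
    nlinarith [mul_nonneg (by linarith : (0:ℤ) ≤ (a:ℤ)-1) hp1,
      mul_nonneg (by linarith : (0:ℤ) ≤ (b:ℤ)-1) hp2]
  exact_mod_cast this

/-! ### Gaussian binomials -/

def gbp (u : ℕ) : ℕ → ℤ → PowerSeries ℤ
  | 0, r => if r = 0 then 1 else 0
  | m+1, r => gbp u m r + X ^ (u * ((m:ℤ) + 1 - r).toNat) * gbp u m (r - 1)

lemma gbp_succ (u m : ℕ) (r : ℤ) :
    gbp u (m+1) r = gbp u m r + X ^ (u * ((m:ℤ) + 1 - r).toNat) * gbp u m (r - 1) := rfl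

lemma gbp_neg (u : ℕ) : ∀ m (r : ℤ), r < 0 → gbp u m r = 0 := by
  intro m
  induction m with
  | zero => intro r hr; exact if_neg (by omega)
  | succ m ih =>
    intro r hr
    rw [gbp_succ, ih r hr, ih (r-1) (by omega)]
    ring

lemma gbp_gt (u : ℕ) : ∀ (m : ℕ) (r : ℤ), (m:ℤ) < r → gbp u m r = 0 := by
  intro m
  induction m with
  | zero => intro r hr; exact if_neg (by omega)
  | succ m ih =>
    intro r hr
    rw [gbp_succ, ih r (by push_cast; omega), ih (r-1) (by push_cast at hr ⊢; omega)]
    ring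

lemma gbp_zero (u : ℕ) : ∀ m, gbp u m 0 = 1 := by
  intro m
  induction m with
  | zero => rfl
  | succ m ih =>
    rw [gbp_succ, ih, show (0:ℤ)-1 = -1 from by ring, gbp_neg u m (-1) (by omega)]
    ring

lemma gbp_self (u : ℕ) : ∀ (m : ℕ), gbp u m ((m:ℤ)) = 1 := by
  intro m
  induction m with
  | zero => rfl
  | succ m ih =>
    have h1 : gbp u m ((m:ℤ)+1) = 0 := gbp_gt u m ((m:ℤ)+1) (by omega)
    push_cast
    rw [gbp_succ, h1, show ((m:ℤ)+1-((m:ℤ)+1)).toNat = 0 from by omega,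
      show (m:ℤ)+1-1 = (m:ℤ) from by ring, ih]
    ring

lemma gbp_base (u : ℕ) (r : ℤ) : gbp u 0 r = if r = 0 then 1 else 0 := rfl

lemma pascal2 (u : ℕ) : ∀ (m : ℕ) (r : ℤ),
    gbp u (m+1) r = X ^ (u * r.toNat) * gbp u m r + gbp u m (r - 1) := by
  intro m
  induction m with
  | zero =>
    intro r
    rcases lt_trichotomy r 0 with hr | hr | hr
    · rw [gbp_neg u 1 r hr, gbp_neg u 0 r hr, gbp_neg u 0 (r-1) (by omega)]; ring
    · subst hr
      rw [gbp_zero, gbp_zero, show (0:ℤ)-1 = -1 from by ring, gbp_neg u 0 (-1) (by omega)]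
      simp
    · rcases eq_or_lt_of_le (by omega : (1:ℤ) ≤ r) with hr1 | hr1
      · rw [← hr1, gbp_succ, gbp_base, gbp_base]
        norm_num
      · rw [gbp_gt u 1 r (by push_cast; omega), gbp_gt u 0 r (by omega),
          gbp_gt u 0 (r-1) (by omega)]
        ring
  | succ m ih =>
    intro r
    rcases lt_trichotomy r 0 with hr | hr | hr
    · rw [gbp_neg u (m+2) r hr, gbp_neg u (m+1) r hr, gbp_neg u (m+1) (r-1) (by omega)]; ring
    · subst hr
      rw [gbp_zero, gbp_zero, show (0:ℤ)-1 = -1 from by ring, gbp_neg u (m+1) (-1) (by omega)]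
      simp
    · rcases lt_or_ge ((m:ℤ)+2) r with hbig | hok
      · rw [gbp_gt u (m+2) r (by push_cast; omega), gbp_gt u (m+1) r (by push_cast; omega),
          gbp_gt u (m+1) (r-1) (by push_cast; omega)]
        ring
      · have expandL : gbp u (m+1+1) r
            = gbp u (m+1) r + X ^ (u * ((m:ℤ) + 2 - r).toNat) * gbp u (m+1) (r - 1) := by
          rw [gbp_succ u (m+1) r,
            show (((m+1:ℕ)):ℤ) + 1 - r = (m:ℤ) + 2 - r from by push_cast; ring]
        have hL1 := ih r
        have hL2 : gbp u (m+1) (r-1)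
            = X ^ (u * (r-1).toNat) * gbp u m (r-1) + gbp u m (r-2) := by
          rw [ih (r-1), show r - 1 - 1 = r - 2 from by ring]
        have hR1 := gbp_succ u m r
        have hR2 : gbp u (m+1) (r-1)
            = gbp u m (r-1) + X ^ (u * ((m:ℤ) + 2 - r).toNat) * gbp u m (r-2) := by
          rw [gbp_succ u m (r-1), show r - 1 - 1 = r - 2 from by ring,
            show ((m:ℤ) + 1 - (r-1)).toNat = ((m:ℤ) + 2 - r).toNat from by omega]
        calc gbp u (m+1+1) r
            = (X ^ (u * r.toNat) * gbp u m r + gbp u m (r-1))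
              + X ^ (u * ((m:ℤ)+2-r).toNat)
                * (X ^ (u * (r-1).toNat) * gbp u m (r-1) + gbp u m (r-2)) := by
              rw [expandL, hL1, hL2]
          _ = X ^ (u * r.toNat)
                * (gbp u m r + X ^ (u * ((m:ℤ)+1-r).toNat) * gbp u m (r-1))
              + (gbp u m (r-1) + X ^ (u * ((m:ℤ)+2-r).toNat) * gbp u m (r-2)) := by
              rcases eq_or_lt_of_le hok with hr2 | hr2
              · rw [gbp_gt u m (r-1) (by omega)]
                ring
              · have hP : (X : PowerSeries ℤ) ^ (u * ((m:ℤ)+2-r).toNat)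
                    * X ^ (u * (r-1).toNat)
                    = X ^ (u * r.toNat) * X ^ (u * ((m:ℤ)+1-r).toNat) := by
                  rw [← pow_add, ← pow_add, ← Nat.mul_add, ← Nat.mul_add,
                    show ((m:ℤ)+2-r).toNat + (r-1).toNat
                      = r.toNat + ((m:ℤ)+1-r).toNat from by omega]
                linear_combination (gbp u m (r-1)) * hP
          _ = X ^ (u * r.toNat) * gbp u (m+1) r + gbp u (m+1) (r-1) := by
              rw [hR1, hR2]

lemma dagger (u N : ℕ) (i : ℤ) (h1 : -((N:ℤ)+1) ≤ i) (h2 : i ≤ (N:ℤ)+1) :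
    gbp u (2*N+2) ((N:ℤ)+1+i)
      = gbp u (2*N) ((N:ℤ)+i) * (1 + X ^ (u * (2*N+1)))
        + gbp u (2*N) ((N:ℤ)+i-1) * X ^ (u * (((N:ℤ)+1-i).toNat))
        + gbp u (2*N) ((N:ℤ)+i+1) * X ^ (u * (((N:ℤ)+1+i).toNat)) := by
  rcases eq_or_lt_of_le h2 with htop | h2'
  · subst htop
    have l1 : gbp u (2*N+2) ((N:ℤ)+1+((N:ℤ)+1)) = 1 := by
      have := gbp_self u (2*N+2)
      rw [show (((2*N+2:ℕ)):ℤ) = (N:ℤ)+1+((N:ℤ)+1) from by push_cast; ring] at this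
      exact this
    have l2 : gbp u (2*N) ((N:ℤ)+((N:ℤ)+1)) = 0 := gbp_gt u (2*N) _ (by push_cast; omega)
    have l3 : gbp u (2*N) ((N:ℤ)+((N:ℤ)+1)-1) = 1 := by
      have := gbp_self u (2*N)
      rw [show (((2*N:ℕ)):ℤ) = (N:ℤ)+((N:ℤ)+1)-1 from by push_cast; ring] at this
      exact this
    have l4 : gbp u (2*N) ((N:ℤ)+((N:ℤ)+1)+1) = 0 := gbp_gt u (2*N) _ (by push_cast; omega)
    rw [l1, l2, l3, l4, show ((N:ℤ)+1-((N:ℤ)+1)).toNat = 0 from by omega]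
    ring
  rcases eq_or_lt_of_le h1 with hbot | h1'
  · rw [← hbot]
    have l1 : gbp u (2*N+2) ((N:ℤ)+1+(-((N:ℤ)+1))) = 1 := by
      rw [show (N:ℤ)+1+(-((N:ℤ)+1)) = 0 from by ring]; exact gbp_zero u _
    have l2 : gbp u (2*N) ((N:ℤ)+(-((N:ℤ)+1))) = 0 := gbp_neg u (2*N) _ (by omega)
    have l3 : gbp u (2*N) ((N:ℤ)+(-((N:ℤ)+1))-1) = 0 := gbp_neg u (2*N) _ (by omega)
    have l4 : gbp u (2*N) ((N:ℤ)+(-((N:ℤ)+1))+1) = 1 := by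
      rw [show (N:ℤ)+(-((N:ℤ)+1))+1 = 0 from by ring]; exact gbp_zero u _
    rw [l1, l2, l3, l4, show ((N:ℤ)+1+(-((N:ℤ)+1))).toNat = 0 from by omega]
    ring
  -- main case : |i| ≤ N
  have hA : gbp u (2*N+2) ((N:ℤ)+1+i)
      = gbp u (2*N+1) ((N:ℤ)+1+i)
        + X ^ (u * ((N:ℤ)+1-i).toNat) * gbp u (2*N+1) ((N:ℤ)+i) := by
    rw [show (2*N+2) = (2*N+1)+1 from by ring, gbp_succ u (2*N+1) ((N:ℤ)+1+i),
      show (((2*N+1:ℕ)):ℤ) + 1 - ((N:ℤ)+1+i) = (N:ℤ)+1-i from by push_cast; ring,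
      show (N:ℤ)+1+i-1 = (N:ℤ)+i from by ring]
  have hB : gbp u (2*N+1) ((N:ℤ)+1+i)
      = X ^ (u * ((N:ℤ)+1+i).toNat) * gbp u (2*N) ((N:ℤ)+1+i) + gbp u (2*N) ((N:ℤ)+i) := by
    rw [show (2*N+1) = (2*N)+1 from by ring, pascal2 u (2*N) ((N:ℤ)+1+i),
      show (N:ℤ)+1+i-1 = (N:ℤ)+i from by ring]
  have hC : gbp u (2*N+1) ((N:ℤ)+i)
      = X ^ (u * ((N:ℤ)+i).toNat) * gbp u (2*N) ((N:ℤ)+i) + gbp u (2*N) ((N:ℤ)+i-1) := by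
    rw [show (2*N+1) = (2*N)+1 from by ring, pascal2 u (2*N) ((N:ℤ)+i)]
  have hE : (X:PowerSeries ℤ) ^ (u * ((N:ℤ)+1-i).toNat) * X ^ (u * ((N:ℤ)+i).toNat)
      = X ^ (u * (2*N+1)) := by
    rw [← pow_add, ← Nat.mul_add,
      show ((N:ℤ)+1-i).toNat + ((N:ℤ)+i).toNat = 2*N+1 from by omega]
  calc gbp u (2*N+2) ((N:ℤ)+1+i)
      = X ^ (u * ((N:ℤ)+1+i).toNat) * gbp u (2*N) ((N:ℤ)+1+i) + gbp u (2*N) ((N:ℤ)+i)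
        + X ^ (u * ((N:ℤ)+1-i).toNat)
          * (X ^ (u * ((N:ℤ)+i).toNat) * gbp u (2*N) ((N:ℤ)+i)
             + gbp u (2*N) ((N:ℤ)+i-1)) := by
        rw [hA, hB, hC]
    _ = gbp u (2*N) ((N:ℤ)+i) * (1 + X ^ (u * (2*N+1)))
        + gbp u (2*N) ((N:ℤ)+i-1) * X ^ (u * (((N:ℤ)+1-i).toNat))
        + gbp u (2*N) ((N:ℤ)+i+1) * X ^ (u * (((N:ℤ)+1+i).toNat)) := by
        rw [show (N:ℤ)+i+1 = (N:ℤ)+1+i from by ring]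
        linear_combination gbp u (2*N) ((N:ℤ)+i) * hE


lemma sum_shift (f : ℤ → PowerSeries ℤ) (lo hi c : ℤ) :
    ∑ i ∈ Icc lo hi, f (i + c) = ∑ j ∈ Icc (lo + c) (hi + c), f j := by
  rw [← Finset.map_add_right_Icc, Finset.sum_map]
  rfl

lemma FI (a b : ℕ) : ∀ N : ℕ,
    ∏ k ∈ range N, ((1 + (X:PowerSeries ℤ) ^ (a + (a+b)*k)) * (1 + X ^ (b + (a+b)*k)))
      = ∑ i ∈ Icc (-(N:ℤ)) (N:ℤ), gbp (a+b) (2*N) ((N:ℤ)+i) * X ^ (eex a b i) := by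
  intro N
  induction N with
  | zero =>
    rw [range_zero, prod_empty]
    norm_num
    rw [show eex a b 0 = 0 from by unfold eex TT; norm_num, gbp_zero]
    norm_num
  | succ N ih =>
    rw [prod_range_succ, ih]
    push_cast
    rw [show 2*(N+1) = 2*N+2 from by ring]
    set u := a + b with hu
    set g : ℤ → PowerSeries ℤ := fun j => gbp u (2*N) ((N:ℤ)+j) * X ^ (eex a b j) with hg
    set S : PowerSeries ℤ := ∑ i ∈ Icc (-(N:ℤ)) (N:ℤ), g i with hS
    have step1 : ∑ i ∈ Icc (-((N:ℤ)+1)) ((N:ℤ)+1), gbp u (2*N+2) ((N:ℤ)+1+i) * X ^ (eex a b i)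
        = ∑ i ∈ Icc (-((N:ℤ)+1)) ((N:ℤ)+1),
            (g i * (1 + X ^ (u * (2*N+1)))
              + (g (i-1) * X ^ (a + u*N)
              + g (i+1) * X ^ (b + u*N))) := by
      refine Finset.sum_congr rfl ?_
      intro i hi
      rw [Finset.mem_Icc] at hi
      have t2 : gbp u (2*N) ((N:ℤ)+i-1) * X ^ (u * (((N:ℤ)+1-i).toNat)) * X ^ (eex a b i)
          = g (i-1) * X ^ (a + u*N) := by
        simp only [hg]
        rw [mul_assoc, ← pow_add,
          show u * ((N:ℤ)+1-i).toNat + eex a b i = eex a b (i-1) + (a + u * N) from by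
            have h' := eshift1 a b N i (by omega : i ≤ (N:ℤ)+1)
            rw [← hu] at h'
            linarith [h'],
          show (N:ℤ)+i-1 = (N:ℤ)+(i-1) from by ring, pow_add]
        ring
      have t3 : gbp u (2*N) ((N:ℤ)+i+1) * X ^ (u * (((N:ℤ)+1+i).toNat)) * X ^ (eex a b i)
          = g (i+1) * X ^ (b + u*N) := by
        simp only [hg]
        rw [mul_assoc, ← pow_add,
          show u * ((N:ℤ)+1+i).toNat + eex a b i = eex a b (i+1) + (b + u * N) from by
            have h' := eshift2 a b N i (by omega : -((N:ℤ)+1) ≤ i)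
            rw [← hu] at h'
            linarith [h'],
          show (N:ℤ)+i+1 = (N:ℤ)+(i+1) from by ring, pow_add]
        ring
      rw [dagger u N i (by omega) (by omega)]
      have hgi : g i = gbp u (2*N) ((N:ℤ)+i) * X ^ (eex a b i) := by simp only [hg]
      linear_combination t2 + t3 - (1 + X ^ (u * (2*N+1))) * hgi
    have hsub : Icc (-(N:ℤ)) (N:ℤ) ⊆ Icc (-((N:ℤ)+1)) ((N:ℤ)+1) := by
      intro x hx
      rw [Finset.mem_Icc] at *
      omega
    have e1 : ∑ i ∈ Icc (-((N:ℤ)+1)) ((N:ℤ)+1), g i * (1 + X ^ (u * (2*N+1)))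
        = S * (1 + X ^ (u * (2*N+1))) := by
      rw [hS, ← Finset.sum_mul]
      congr 1
      refine (Finset.sum_subset hsub ?_).symm
      intro x hx hx2
      rw [Finset.mem_Icc] at hx hx2
      simp only [hg]
      rcases (by omega : x = -((N:ℤ)+1) ∨ x = (N:ℤ)+1) with h | h <;> subst h
      · rw [gbp_neg u (2*N) _ (by omega)]; ring
      · rw [gbp_gt u (2*N) _ (by push_cast; omega)]; ring
    have e2 : ∑ i ∈ Icc (-((N:ℤ)+1)) ((N:ℤ)+1), g (i-1) * X ^ (a + u*N)
        = S * X ^ (a + u*N) := by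
      rw [← Finset.sum_mul]
      congr 1
      have hsh := sum_shift g (-((N:ℤ)+1)) ((N:ℤ)+1) (-1)
      simp only [show ∀ i:ℤ, i + (-1) = i - 1 from fun i => by ring] at hsh
      rw [hsh, hS]
      refine (Finset.sum_subset (by intro x hx; rw [Finset.mem_Icc] at *; omega) ?_).symm
      intro x hx hx2
      rw [Finset.mem_Icc] at hx hx2
      simp only [hg]
      rw [gbp_neg u (2*N) _ (by omega)]
      ring
    have e3 : ∑ i ∈ Icc (-((N:ℤ)+1)) ((N:ℤ)+1), g (i+1) * X ^ (b + u*N)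
        = S * X ^ (b + u*N) := by
      rw [← Finset.sum_mul]
      congr 1
      rw [sum_shift g (-((N:ℤ)+1)) ((N:ℤ)+1) 1, hS]
      refine (Finset.sum_subset (by intro x hx; rw [Finset.mem_Icc] at *; omega) ?_).symm
      intro x hx hx2
      rw [Finset.mem_Icc] at hx hx2
      simp only [hg]
      rw [gbp_gt u (2*N) _ (by push_cast; omega)]
      ring
    rw [step1, Finset.sum_add_distrib, Finset.sum_add_distrib, e1, e2, e3]
    have hAB : (X:PowerSeries ℤ) ^ (a + u*N) * X ^ (b + u*N) = X ^ (u * (2*N+1)) := by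
      rw [← pow_add, show (a + u*N) + (b + u*N) = u * (2*N+1) from by rw [hu]; ring]
    linear_combination S * hAB



/-! ### product formula for Gaussian binomials, and the infinite JTP -/

def QQ (u s : ℕ) : PowerSeries ℤ := ∏ k ∈ range s, (1 - X ^ (u*(k+1)))

lemma regQ {u : ℕ} (hu : 1 ≤ u) : Reg (fun k => (1:PowerSeries ℤ) - X ^ (u*(k+1))) := by
  intro k n hn
  have hk : k + 1 ≤ u * (k+1) := Nat.le_mul_of_pos_left _ (by omega)
  rw [map_sub, coeff_X_pow, if_neg (by omega)]
  ring

lemma regNeg {c m : ℕ} (hc : 1 ≤ c) (hm : 1 ≤ m) :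
    Reg (fun k => (1:PowerSeries ℤ) + X ^ (c + m*k)) := by
  intro k n hn
  have hk : k ≤ m * k := Nat.le_mul_of_pos_left _ (by omega)
  rw [map_add, coeff_X_pow, if_neg (by omega)]
  ring

lemma QQ_succ (u s : ℕ) : QQ u (s+1) = QQ u s * (1 - X ^ (u*(s+1))) := prod_range_succ _ _

lemma QQ_coeff_stable {u : ℕ} (hu : 1 ≤ u) {q s s' : ℕ} (h1 : q ≤ s) (h2 : q ≤ s') :
    coeff (R := ℤ) q (QQ u s) = coeff (R := ℤ) q (QQ u s') := by
  unfold QQ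
  rcases le_total s s' with h | h
  · exact (prod_coeff_stable (regQ hu) h1 h).symm
  · exact prod_coeff_stable (regQ hu) h2 h

lemma gbp_mul_QQ (u : ℕ) : ∀ (m : ℕ) (r : ℤ), 0 ≤ r → r ≤ (m:ℤ) →
    gbp u m r * QQ u r.toNat * QQ u (m - r.toNat) = QQ u m := by
  intro m
  induction m with
  | zero =>
    intro r h0 h1
    have : r = 0 := by omega
    subst this
    rw [gbp_zero]
    norm_num [QQ]
  | succ m ih =>
    intro r h0 h1
    rcases eq_or_lt_of_le h0 with h00 | hpos
    · rw [← h00, gbp_zero]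
      norm_num [QQ]
    rcases eq_or_lt_of_le h1 with htop | hlt
    · subst htop
      have hs : gbp u (m+1) (((m+1:ℕ)):ℤ) = 1 := gbp_self u (m+1)
      rw [hs, show (((m+1:ℕ)):ℤ).toNat = m+1 from by omega]
      norm_num [QQ]
    -- 1 ≤ r ≤ m
    have hr1 : (1:ℤ) ≤ r := hpos
    have hrm : r ≤ (m:ℤ) := by
      have : r < ((m+1:ℕ):ℤ) := hlt
      push_cast at this
      omega
    have key1 : m + 1 - r.toNat = (m - r.toNat) + 1 := by omega
    have key2 : r.toNat = (r-1).toNat + 1 := by omega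
    have key3 : m + 1 - r.toNat = m - (r-1).toNat := by omega
    rw [gbp_succ, add_mul, add_mul]
    have part1 : gbp u m r * QQ u r.toNat * QQ u (m + 1 - r.toNat)
        = QQ u m * (1 - X ^ (u * (m + 1 - r.toNat))) := by
      rw [key1, QQ_succ, ← mul_assoc, ih r h0 hrm,
        show m - r.toNat + 1 = m + 1 - r.toNat from by omega]
    have part2 : X ^ (u * ((m:ℤ) + 1 - r).toNat) * gbp u m (r-1) * QQ u r.toNat
          * QQ u (m + 1 - r.toNat)
        = X ^ (u * (m + 1 - r.toNat)) * (1 - X ^ (u * r.toNat)) * QQ u m := by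
      have hihr := ih (r-1) (by omega) (by omega)
      rw [show ((m:ℤ) + 1 - r).toNat = m + 1 - r.toNat from by omega, key2, QQ_succ,
        show (r-1).toNat + 1 = r.toNat from by omega, key3]
      linear_combination (X ^ (u * (m - (r-1).toNat)) * (1 - X ^ (u * r.toNat))) * hihr
    rw [part1, part2, QQ_succ]
    have hXX : (X:PowerSeries ℤ) ^ (u * (m + 1 - r.toNat)) * X ^ (u * r.toNat)
        = X ^ (u * (m+1)) := by
      rw [← pow_add, ← Nat.mul_add, show m + 1 - r.toNat + r.toNat = m + 1 from by omega]
    linear_combination (-(QQ u m)) * hXX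

lemma coeff_one_nat (n : ℕ) : coeff (R := ℤ) n (1:PowerSeries ℤ) = if n = 0 then 1 else 0 := by
  simpa using PowerSeries.coeff_one n (R := ℤ)

lemma inv_unique_coeff (E D : PowerSeries ℤ) (hE : coeff (R := ℤ) 0 E = 1) (n : ℕ)
    (h : ∀ j, j ≤ n → coeff (R := ℤ) j (D * E) = coeff (R := ℤ) j E) :
    ∀ j, j ≤ n → coeff (R := ℤ) j D = coeff (R := ℤ) j 1 := by
  intro j
  induction j using Nat.strong_induction_on with
  | _ j IH =>
    intro hj
    have hmul := h j hj
    rw [coeff_mul, Finset.Nat.sum_antidiagonal_eq_sum_range_succ_mk,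
      Finset.sum_range_succ] at hmul
    have hrepl : ∑ k ∈ range j, coeff (R := ℤ) k D * coeff (R := ℤ) (j-k) E
        = ∑ k ∈ range j, coeff (R := ℤ) k (1:PowerSeries ℤ) * coeff (R := ℤ) (j-k) E := by
      refine Finset.sum_congr rfl ?_
      intro k hk
      have hkj := mem_range.mp hk
      rw [IH k hkj (by omega)]
    rw [hrepl] at hmul
    rcases Nat.eq_zero_or_pos j with h0 | hpos
    · subst h0
      have h2 : coeff (R := ℤ) 0 D * coeff (R := ℤ) 0 E = coeff (R := ℤ) 0 E := by simpa using hmul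
      rw [hE, mul_one] at h2
      rw [h2, coeff_one_nat]
      norm_num
    · have hsum : ∑ k ∈ range j, coeff (R := ℤ) k (1:PowerSeries ℤ) * coeff (R := ℤ) (j-k) E
          = coeff (R := ℤ) j E := by
        rw [Finset.sum_eq_single_of_mem 0 (mem_range.mpr hpos)]
        · rw [coeff_one_nat, if_pos rfl, one_mul, Nat.sub_zero]
        · intro k _ hk0
          rw [coeff_one_nat, if_neg hk0, zero_mul]
      rw [hsum, Nat.sub_self, hE, mul_one] at hmul
      have : coeff (R := ℤ) j D = 0 := by linarith
      rw [this, coeff_one_nat, if_neg (by omega)]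

lemma coeff_mul_congr (A F F' : PowerSeries ℤ) (n : ℕ)
    (h : ∀ q, q ≤ n → coeff (R := ℤ) q F = coeff (R := ℤ) q F') :
    coeff (R := ℤ) n (A * F) = coeff (R := ℤ) n (A * F') := by
  rw [coeff_mul, coeff_mul]
  refine Finset.sum_congr rfl ?_
  intro p hp
  rw [HasAntidiagonal.mem_antidiagonal] at hp
  rw [h p.2 (by omega)]

def negE (c m : ℕ) : PowerSeries ℤ := plim (fun k => 1 + X ^ (c + m*k))

open scoped Classical in
def thetaE (a b : ℕ) : PowerSeries ℤ :=
  PowerSeries.mk fun n => if ∃ i : ℤ, eex a b i = n then 1 else 0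

lemma eulerSub_eq_plim (u : ℕ) :
    eulerSub u = plim (fun k => 1 - X ^ (u*(k+1))) := rfl

theorem jtp (a b : ℕ) (ha : 1 ≤ a) (hb : 1 ≤ b)
    (hinj : ∀ i i' : ℤ, eex a b i = eex a b i' → i = i') :
    negE a (a+b) * negE b (a+b) * eulerSub (a+b) = thetaE a b := by
  have hu : 1 ≤ a + b := by omega
  have regA : Reg (fun k => (1:PowerSeries ℤ) + X ^ (a + (a+b)*k)) := regNeg ha hu
  have regB : Reg (fun k => (1:PowerSeries ℤ) + X ^ (b + (a+b)*k)) := regNeg hb hu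
  have regC := regQ (u := a+b) hu
  have hE0 : coeff (R := ℤ) 0 (QQ (a+b) (2*0+2)) = 1 := by
    rw [QQ_coeff_stable hu (Nat.zero_le _) (le_refl 0)]
    simp [QQ]
  ext n
  set N := 2*n+2 with hN
  have hE0' : coeff (R := ℤ) 0 (QQ (a+b) N) = 1 := by
    rw [QQ_coeff_stable hu (Nat.zero_le _) (le_refl 0)]
    simp [QQ]
  rw [eulerSub_eq_plim, negE, negE, plim_mul regA regB, plim_mul (regA.mul regB) regC,
    coeff_plim ((regA.mul regB).mul regC) (show n ≤ N from by omega),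
    prod_mul_distrib, FI a b N]
  rw [show (∏ k ∈ range N, ((1:PowerSeries ℤ) - X ^ ((a+b)*(k+1)))) = QQ (a+b) N from rfl]
  rw [Finset.sum_mul, map_sum]
  have hterm : ∀ i ∈ Icc (-(N:ℤ)) (N:ℤ),
      coeff (R := ℤ) n (gbp (a+b) (2*N) ((N:ℤ)+i) * X ^ (eex a b i) * QQ (a+b) N)
        = if eex a b i = n then 1 else 0 := by
    intro i hi
    rw [Finset.mem_Icc] at hi
    rw [mul_right_comm, coeff_mul_X_pow']
    rcases le_or_gt (eex a b i) n with hle | hgt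
    · have habs : i.natAbs ≤ n := le_trans (eabs a b ha hb i) hle
      have hNi0 : (0:ℤ) ≤ (N:ℤ)+i := by omega
      have hPF := gbp_mul_QQ (a+b) (2*N) ((N:ℤ)+i) hNi0 (by push_cast; omega)
      have hh : ∀ j, j ≤ n →
          coeff (R := ℤ) j ((gbp (a+b) (2*N) ((N:ℤ)+i) * QQ (a+b) N) * QQ (a+b) N)
            = coeff (R := ℤ) j (QQ (a+b) N) := by
        intro j hj
        have hQQQ : ∀ q, q ≤ j → coeff (R := ℤ) q (QQ (a+b) N * QQ (a+b) N)
            = coeff (R := ℤ) q (QQ (a+b) (((N:ℤ)+i).toNat)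
                * QQ (a+b) (2*N - ((N:ℤ)+i).toNat)) := by
          intro q hq
          rw [coeff_mul, coeff_mul]
          refine Finset.sum_congr rfl ?_
          intro p hp
          rw [HasAntidiagonal.mem_antidiagonal] at hp
          rw [QQ_coeff_stable hu (show p.1 ≤ N from by omega)
              (show p.1 ≤ ((N:ℤ)+i).toNat from by omega),
            QQ_coeff_stable hu (show p.2 ≤ N from by omega)
              (show p.2 ≤ 2*N - ((N:ℤ)+i).toNat from by omega)]
        calc coeff (R := ℤ) j ((gbp (a+b) (2*N) ((N:ℤ)+i) * QQ (a+b) N) * QQ (a+b) N)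
            = coeff (R := ℤ) j (gbp (a+b) (2*N) ((N:ℤ)+i) * (QQ (a+b) N * QQ (a+b) N)) := by
              rw [mul_assoc]
          _ = coeff (R := ℤ) j (gbp (a+b) (2*N) ((N:ℤ)+i) * (QQ (a+b) (((N:ℤ)+i).toNat)
                * QQ (a+b) (2*N - ((N:ℤ)+i).toNat))) :=
              coeff_mul_congr _ _ _ j hQQQ
          _ = coeff (R := ℤ) j (QQ (a+b) (2*N)) := by rw [← mul_assoc, hPF]
          _ = coeff (R := ℤ) j (QQ (a+b) N) := QQ_coeff_stable hu (by omega) (by omega)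
      have hGB := inv_unique_coeff (QQ (a+b) N)
        (gbp (a+b) (2*N) ((N:ℤ)+i) * QQ (a+b) N) hE0' n hh
      rw [if_pos hle, hGB (n - eex a b i) (by omega), coeff_one_nat]
      split_ifs <;> omega
    · rw [if_neg (by omega), if_neg (by omega)]
  rw [Finset.sum_congr rfl hterm, thetaE, coeff_mk]
  by_cases hex : ∃ i : ℤ, eex a b i = n
  · obtain ⟨i0, hi0⟩ := hex
    rw [if_pos ⟨i0, hi0⟩]
    have hmem : i0 ∈ Icc (-(N:ℤ)) (N:ℤ) := by
      rw [Finset.mem_Icc]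
      have := eabs a b ha hb i0
      omega
    rw [Finset.sum_eq_single_of_mem i0 hmem]
    · rw [if_pos hi0]
    · intro k _ hki
      rw [if_neg (fun hc => hki (hinj k i0 (by rw [hc, hi0])))]
  · rw [if_neg hex]
    refine Finset.sum_eq_zero ?_
    intro k _
    rw [if_neg (fun hc => hex ⟨k, hc⟩)]

/-! ### auxiliary product identities over ℤ -/

def negAll (j : ℕ) : PowerSeries ℤ := plim (fun k => 1 + X ^ (j*(k+1)))

lemma regNegAll {j : ℕ} (hj : 1 ≤ j) : Reg (fun k => (1:PowerSeries ℤ) + X ^ (j*(k+1))) := by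
  intro k n hn
  have hk : k + 1 ≤ j * (k+1) := Nat.le_mul_of_pos_left _ (by omega)
  rw [map_add, coeff_X_pow, if_neg (by omega)]
  ring

lemma reg_one {R : Type*} [CommRing R] : Reg (fun _ => (1:PowerSeries R)) :=
  fun _ _ _ => rfl

lemma plim_eq_plim {R : Type*} [CommRing R] {g g' : ℕ → PowerSeries R}
    (hg : Reg g) (hg' : Reg g')
    (key : ∀ m, ∃ m1 m2, m ≤ m1 ∧ m ≤ m2 ∧ ∏ k ∈ range m1, g k = ∏ k ∈ range m2, g' k) :
    plim g = plim g' := by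
  have h := plim_mul_eq_plim_mul hg reg_one hg' reg_one ?_
  · rwa [plim_one, mul_one, mul_one] at h
  · intro m
    obtain ⟨m1, m2, h1, h2, hkey⟩ := key m
    exact ⟨m1, m, m2, m, h1, le_refl m, h2, le_refl m, by
      rw [prod_const_one, mul_one, mul_one, hkey]⟩

lemma plim_const_one {R : Type*} [CommRing R] {g : ℕ → PowerSeries R} (hg : Reg g) :
    coeff (R := R) 0 (plim g) = 1 := by
  rw [coeff_plim hg (le_refl 0)]
  simp

lemma plim_ne_zero {g : ℕ → PowerSeries ℤ} (hg : Reg g) : plim g ≠ 0 := by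
  intro h
  have h2 := plim_const_one hg
  rw [h, map_zero] at h2
  exact one_ne_zero h2.symm

-- N1 : (-q^j;q^j) (q^j;q^j) = (q^{2j};q^{2j})
lemma N1 {j : ℕ} (hj : 1 ≤ j) : negAll j * eulerSub j = eulerSub (2*j) := by
  rw [negAll, eulerSub_eq_plim, eulerSub_eq_plim, plim_mul (regNegAll hj) (regQ hj)]
  refine plim_eq_plim ((regNegAll hj).mul (regQ hj)) (regQ (by omega)) ?_
  intro m
  refine ⟨m, m, le_refl m, le_refl m, ?_⟩
  refine Finset.prod_congr rfl ?_
  intro k _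
  have hXX : (X:PowerSeries ℤ)^(j*(k+1)) * X^(j*(k+1)) = X^(2*j*(k+1)) := by
    rw [← pow_add]
    congr 1
    ring
  linear_combination -hXX

-- N2 : (-q^j;q^{2j}) (-q^{2j};q^{2j}) = (-q^j;q^j)
lemma N2 {j : ℕ} (hj : 1 ≤ j) : negE j (2*j) * negAll (2*j) = negAll j := by
  rw [negE, negAll, negAll, plim_mul (regNeg hj (by omega)) (regNegAll (by omega))]
  refine plim_eq_plim ((regNeg hj (by omega)).mul (regNegAll (by omega))) (regNegAll hj) ?_
  intro m
  refine ⟨m, 2*m, le_refl m, by omega, ?_⟩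
  induction m with
  | zero => simp
  | succ m ih =>
    rw [prod_range_succ, ih, show 2*(m+1) = (2*m+1)+1 from by ring,
      prod_range_succ, prod_range_succ,
      show j*(2*m+1) = j + 2*j*m from by ring,
      show j*(2*m+1+1) = 2*j*(m+1) from by ring]
    ring

-- N3 : (-q^j;q^{4j}) (-q^{3j};q^{4j}) = (-q^j;q^{2j})
lemma N3 {j : ℕ} (hj : 1 ≤ j) : negE j (4*j) * negE (3*j) (4*j) = negE j (2*j) := by
  rw [negE, negE, negE, plim_mul (regNeg hj (by omega)) (regNeg (by omega) (by omega))]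
  refine plim_eq_plim ((regNeg hj (by omega)).mul (regNeg (by omega) (by omega)))
    (regNeg hj (by omega)) ?_
  intro m
  refine ⟨m, 2*m, le_refl m, by omega, ?_⟩
  induction m with
  | zero => simp
  | succ m ih =>
    rw [prod_range_succ, ih, show 2*(m+1) = (2*m+1)+1 from by ring,
      prod_range_succ, prod_range_succ,
      show j + 2*j*(2*m) = j + 4*j*m from by ring,
      show j + 2*j*(2*m+1) = 3*j + 4*j*m from by ring]
    ring

-- N4 : (-q^j;q^{3j}) (-q^{2j};q^{3j}) (-q^{3j};q^{3j}) = (-q^j;q^j)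
lemma N4 {j : ℕ} (hj : 1 ≤ j) :
    negE j (3*j) * negE (2*j) (3*j) * negAll (3*j) = negAll j := by
  rw [negE, negE, negAll, negAll, plim_mul (regNeg hj (by omega)) (regNeg (by omega) (by omega)),
    plim_mul ((regNeg hj (by omega)).mul (regNeg (by omega) (by omega))) (regNegAll (by omega))]
  refine plim_eq_plim (((regNeg hj (by omega)).mul (regNeg (by omega) (by omega))).mul
    (regNegAll (by omega))) (regNegAll hj) ?_
  intro m
  refine ⟨m, 3*m, le_refl m, by omega, ?_⟩
  induction m with
  | zero => simp
  | succ m ih =>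
    rw [prod_range_succ, ih, show 3*(m+1) = ((3*m+1)+1)+1 from by ring,
      prod_range_succ, prod_range_succ, prod_range_succ,
      show j*(3*m+1) = j + 3*j*m from by ring,
      show j*(3*m+1+1) = 2*j + 3*j*m from by ring,
      show j*(3*m+1+1+1) = 3*j*(m+1) from by ring]
    ring

/-! ### number-theoretic correspondences -/

lemma nat_eq_of_doubled_cast {x y : ℕ} (h : (x:ℤ)*2 = (y:ℤ)*2) : x = y := by omega

lemma tri_cast (k : ℕ) : ((k*(k+1)/2 : ℕ) : ℤ) * 2 = (k:ℤ)*((k:ℤ)+1) := by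
  have h2 : k*(k+1) % 2 = 0 := Nat.even_iff.mp (Nat.even_mul_succ_self k)
  have h3 : k*(k+1)/2*2 = k*(k+1) := by omega
  exact_mod_cast congrArg (Nat.cast (R := ℤ)) h3

lemma tri_of_i (i : ℤ) : ∃ k : ℕ, k*(k+1)/2 = TT i + 3*TT (-i) := by
  have e2 := TT_cast i
  have e3 := TT_cast (-i)
  rcases le_or_gt i 0 with h | h
  · refine ⟨(-2*i).toNat, nat_eq_of_doubled_cast ?_⟩
    have hk : (((-2*i).toNat : ℕ) : ℤ) = -2*i := Int.toNat_of_nonneg (by omega)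
    rw [tri_cast]
    push_cast
    rw [hk]
    linear_combination -e2 - 3*e3
  · refine ⟨(2*i-1).toNat, nat_eq_of_doubled_cast ?_⟩
    have hk : (((2*i-1).toNat : ℕ) : ℤ) = 2*i-1 := Int.toNat_of_nonneg (by omega)
    rw [tri_cast]
    push_cast
    rw [hk]
    linear_combination -e2 - 3*e3

lemma i_of_tri (k : ℕ) : ∃ i : ℤ, TT i + 3*TT (-i) = k*(k+1)/2 := by
  rcases Nat.even_or_odd k with ⟨m, hm⟩ | ⟨m, hm⟩
  · refine ⟨-(m:ℤ), nat_eq_of_doubled_cast ?_⟩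
    have e2 := TT_cast (-(m:ℤ))
    have e3 := TT_cast (-(-(m:ℤ)))
    rw [tri_cast]
    push_cast
    have hkZ : (k:ℤ) = 2*(m:ℤ) := by exact_mod_cast congrArg (Nat.cast (R := ℤ)) (by omega : k = 2*m)
    linear_combination e2 + 3*e3 - ((k:ℤ) + 2*(m:ℤ) + 1) * hkZ
  · refine ⟨(m:ℤ)+1, nat_eq_of_doubled_cast ?_⟩
    have e2 := TT_cast ((m:ℤ)+1)
    have e3 := TT_cast (-((m:ℤ)+1))
    rw [tri_cast]
    push_cast
    have hkZ : (k:ℤ) = 2*(m:ℤ)+1 := by exact_mod_cast congrArg (Nat.cast (R := ℤ)) hm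
    linear_combination e2 + 3*e3 - ((k:ℤ) + 2*(m:ℤ) + 2) * hkZ

lemma theta_eq_psi {j : ℕ} : thetaE j (3*j) = psiSub j := by
  ext n
  rw [thetaE, psiSub, coeff_mk, coeff_mk]
  have hiff : (∃ i : ℤ, eex j (3*j) i = n) ↔ (∃ k : ℕ, j * (k*(k+1)/2) = n) := by
    constructor
    · rintro ⟨i, hi⟩
      obtain ⟨k, hk⟩ := tri_of_i i
      refine ⟨k, ?_⟩
      rw [hk, ← hi]
      unfold eex
      ring
    · rintro ⟨k, hk⟩
      obtain ⟨i, hi⟩ := i_of_tri k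
      refine ⟨i, ?_⟩
      rw [← hk]
      unfold eex
      calc j * TT i + 3*j * TT (-i) = j * (TT i + 3 * TT (-i)) := by ring
        _ = j * (k*(k+1)/2) := by rw [hi]
  by_cases h : ∃ i : ℤ, eex j (3*j) i = n
  · rw [if_pos h, if_pos (hiff.mp h)]
  · rw [if_neg h, if_neg (fun hc => h (hiff.mpr hc))]

lemma hinj_j3j {j : ℕ} (hj : 1 ≤ j) :
    ∀ i i' : ℤ, eex j (3*j) i = eex j (3*j) i' → i = i' := by
  intro i i' h
  have h1 := eex_cast j (3*j) i
  have h2 := eex_cast j (3*j) i'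
  have hc : ((eex j (3*j) i : ℕ) : ℤ) = ((eex j (3*j) i' : ℕ) : ℤ) := by exact_mod_cast h
  have hj' : (0:ℤ) < (j:ℤ) := by exact_mod_cast hj
  have key : (j:ℤ) * (2 * ((i - i') * (2*(i+i') - 1))) = 0 := by
    push_cast at h1 h2
    linear_combination -h1 + h2 + 2*hc
  have key2 : (i - i') * (2*(i+i') - 1) = 0 := by
    rcases mul_eq_zero.mp key with h | h
    · omega
    · omega
  rcases mul_eq_zero.mp key2 with h | h
  · omega
  · omega

lemma hinj_36 : ∀ i i' : ℤ, eex 3 6 i = eex 3 6 i' → i = i' := by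
  intro i i' h
  have h1 := eex_cast 3 6 i
  have h2 := eex_cast 3 6 i'
  have hc : ((eex 3 6 i : ℕ) : ℤ) = ((eex 3 6 i' : ℕ) : ℤ) := by exact_mod_cast h
  have key : (3:ℤ) * ((i - i') * (3*(i+i') - 1)) = 0 := by
    push_cast at h1 h2
    linear_combination -h1 + h2 + 2*hc
  have key2 : (i - i') * (3*(i+i') - 1) = 0 := by omega
  rcases mul_eq_zero.mp key2 with h | h
  · omega
  · omega

/-! ### Gauss identity and the f(q^3,q^6) instance -/

lemma eulerSub_ne_zero {u : ℕ} (hu : 1 ≤ u) : eulerSub u ≠ 0 := by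
  rw [eulerSub_eq_plim]
  exact plim_ne_zero (regQ hu)

lemma negAll_ne_zero {j : ℕ} (hj : 1 ≤ j) : negAll j ≠ 0 :=
  plim_ne_zero (regNegAll hj)

lemma gauss {j : ℕ} (hj : 1 ≤ j) : psiSub j * eulerSub j = eulerSub (2*j)^2 := by
  have f1 : psiSub j = negE j (2*j) * eulerSub (4*j) := by
    have h := jtp j (3*j) hj (by omega) (hinj_j3j hj)
    rw [theta_eq_psi, show j + 3*j = 4*j from by ring, N3 hj] at h
    exact h.symm
  have f2 := N2 hj
  have f3 := N1 hj
  have f4 : negAll (2*j) * eulerSub (2*j) = eulerSub (4*j) := by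
    have := N1 (show 1 ≤ 2*j from by omega)
    rwa [show 2*(2*j) = 4*j from by ring] at this
  apply mul_right_cancel₀
    (mul_ne_zero (negAll_ne_zero (show 1 ≤ 2*j from by omega))
      (eulerSub_ne_zero (u := 2*j) (by omega)))
  linear_combination (eulerSub j * negAll (2*j) * eulerSub (2*j)) * f1
    + (eulerSub (4*j) * eulerSub j * eulerSub (2*j)) * f2
    + (eulerSub (4*j) * eulerSub (2*j)) * f3
    - (eulerSub (2*j)^2) * f4

lemma jp36 : thetaE 3 6 * (eulerSub 3 * eulerSub 18) = eulerSub 6 * eulerSub 9^2 := by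
  have j1 : negE 3 9 * negE 6 9 * eulerSub 9 = thetaE 3 6 := by
    have h := jtp 3 6 (by norm_num) (by norm_num) hinj_36
    rwa [show 3 + 6 = 9 from by norm_num] at h
  have n4 : negE 3 9 * negE 6 9 * negAll 9 = negAll 3 := by
    have h := N4 (j := 3) (by norm_num)
    rwa [show 3*3 = 9 from by norm_num, show 2*3 = 6 from by norm_num] at h
  have n1a : negAll 3 * eulerSub 3 = eulerSub 6 := by
    have h := N1 (j := 3) (by norm_num)
    rwa [show 2*3 = 6 from by norm_num] at h
  have n1b : negAll 9 * eulerSub 9 = eulerSub 18 := by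
    have h := N1 (j := 9) (by norm_num)
    rwa [show 2*9 = 18 from by norm_num] at h
  apply mul_right_cancel₀ (negAll_ne_zero (show 1 ≤ 9 from by norm_num))
  linear_combination (-(eulerSub 3 * eulerSub 18 * negAll 9)) * j1
    + (eulerSub 9 * eulerSub 3 * eulerSub 18) * n4
    + (eulerSub 9 * eulerSub 18) * n1a
    - (eulerSub 6 * eulerSub 9) * n1b

/-! ### dissection of psi -/

lemma tri_valZ {k n : ℕ} (h : k*(k+1)/2 = n) : (k:ℤ)*((k:ℤ)+1) = (n:ℤ)*2 := by
  rw [← tri_cast, h]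

lemma tri_val {k v : ℕ} (h : (k:ℤ)*((k:ℤ)+1) = (v:ℤ)*2) : k*(k+1)/2 = v := by
  apply nat_eq_of_doubled_cast
  rw [tri_cast, h]

lemma eex_val {a b v : ℕ} {i : ℤ} (h : (a:ℤ)*(i*(i+1)) + (b:ℤ)*(i*(i-1)) = (v:ℤ)*2) :
    eex a b i = v := by
  apply nat_eq_of_doubled_cast
  rw [eex_cast, h]

lemma eex_valZ {a b n : ℕ} {i : ℤ} (h : eex a b i = n) :
    (a:ℤ)*(i*(i+1)) + (b:ℤ)*(i*(i-1)) = (n:ℤ)*2 := by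
  rw [← eex_cast, h]

lemma ds_iff (n : ℕ) : (∃ k:ℕ, k*(k+1)/2 = n)
    ↔ (∃ i:ℤ, eex 3 6 i = n) ∨ (∃ k:ℕ, 9*(k*(k+1)/2)+1 = n) := by
  constructor
  · rintro ⟨k, hk⟩
    have hnZ := tri_valZ hk
    rcases (by omega : k % 3 = 0 ∨ k % 3 = 1 ∨ k % 3 = 2) with h3 | h3 | h3
    · set m := k / 3 with hm
      have hkZ : (k:ℤ) = 3*(m:ℤ) := by
        have : k = 3*m := by omega
        exact_mod_cast congrArg (Nat.cast (R := ℤ)) this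
      refine Or.inl ⟨-(m:ℤ), eex_val ?_⟩
      linear_combination hnZ - ((k:ℤ)+3*(m:ℤ)+1)*hkZ
    · set m := k / 3 with hm
      have hkZ : (k:ℤ) = 3*(m:ℤ)+1 := by
        have : k = 3*m+1 := by omega
        exact_mod_cast congrArg (Nat.cast (R := ℤ)) this
      refine Or.inr ⟨m, nat_eq_of_doubled_cast ?_⟩
      rw [Nat.cast_add, Nat.cast_mul, Nat.cast_one, Nat.cast_ofNat]
      linear_combination 9*(tri_cast m) + hnZ - ((k:ℤ)+3*(m:ℤ)+2)*hkZ
    · set m := k / 3 with hm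
      have hkZ : (k:ℤ) = 3*(m:ℤ)+2 := by
        have : k = 3*m+2 := by omega
        exact_mod_cast congrArg (Nat.cast (R := ℤ)) this
      refine Or.inl ⟨(m:ℤ)+1, eex_val ?_⟩
      linear_combination hnZ - ((k:ℤ)+3*(m:ℤ)+3)*hkZ
  · rintro (⟨i, hi⟩ | ⟨k, hk⟩)
    · have hiZ := eex_valZ hi
      rcases le_or_gt i 0 with h | h
      · refine ⟨(-3*i).toNat, tri_val ?_⟩
        have hkc : (((-3*i).toNat : ℕ) : ℤ) = -3*i := Int.toNat_of_nonneg (by omega)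
        rw [hkc]
        linear_combination hiZ
      · refine ⟨(3*i-1).toNat, tri_val ?_⟩
        have hkc : (((3*i-1).toNat : ℕ) : ℤ) = 3*i-1 := Int.toNat_of_nonneg (by omega)
        rw [hkc]
        linear_combination hiZ
    · refine ⟨3*k+1, tri_val ?_⟩
      have h2 : 9*((k*(k+1)/2 : ℕ) : ℤ) + 1 = (n:ℤ) := by exact_mod_cast hk
      push_cast
      linear_combination -9*(tri_cast k) + 2*h2

lemma ds_mod0 {n : ℕ} (h : ∃ i:ℤ, eex 3 6 i = n) : n % 3 = 0 := by
  obtain ⟨i, hi⟩ := h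
  have : eex 3 6 i = 3*(TT i + 2*TT (-i)) := by unfold eex; ring
  omega

lemma ds_mod1 {n : ℕ} (h : ∃ k:ℕ, 9*(k*(k+1)/2)+1 = n) : n % 3 = 1 := by
  obtain ⟨k, hk⟩ := h
  omega

lemma ds : psiSub 1 = thetaE 3 6 + psiSub 9 * X := by
  ext n
  rw [map_add, psiSub, psiSub, thetaE, coeff_mk,
    show (X:PowerSeries ℤ) = X^1 from (pow_one _).symm, coeff_mul_X_pow', coeff_mk]
  cases n with
  | zero =>
    rw [if_pos (⟨0, by norm_num⟩ : ∃ k:ℕ, 1 * (k*(k+1)/2) = 0),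
      if_pos (⟨0, by unfold eex TT; norm_num⟩ : ∃ i:ℤ, eex 3 6 i = 0),
      if_neg (by norm_num : ¬ (1 ≤ 0))]
    norm_num
  | succ n =>
    rw [if_pos (by omega : 1 ≤ n+1)]
    have hsub : n + 1 - 1 = n := by omega
    rw [hsub, coeff_mk]
    by_cases hb : ∃ i:ℤ, eex 3 6 i = n+1
    · have hA : ∃ k:ℕ, 1 * (k*(k+1)/2) = n+1 := by
        obtain ⟨k, hk⟩ := (ds_iff (n+1)).mpr (Or.inl hb)
        exact ⟨k, by omega⟩
      have hc : ¬(∃ k:ℕ, 9*(k*(k+1)/2) = n) := by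
        rintro ⟨k, hk⟩
        have h1 := ds_mod1 (n := n+1) ⟨k, by omega⟩
        have h0 := ds_mod0 hb
        omega
      rw [if_pos hA, if_pos hb, if_neg hc]
      norm_num
    · by_cases hcc : ∃ k:ℕ, 9*(k*(k+1)/2) = n
      · have hA : ∃ k:ℕ, 1 * (k*(k+1)/2) = n+1 := by
          obtain ⟨k, hk⟩ := hcc
          obtain ⟨k', hk'⟩ := (ds_iff (n+1)).mpr (Or.inr ⟨k, by omega⟩)
          exact ⟨k', by omega⟩
        rw [if_pos hA, if_neg hb, if_pos hcc]
        norm_num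
      · have hA : ¬ ∃ k:ℕ, 1 * (k*(k+1)/2) = n+1 := by
          rintro ⟨k, hk⟩
          rcases (ds_iff (n+1)).mp ⟨k, by omega⟩ with h' | h'
          · exact hb h'
          · obtain ⟨k', hk'⟩ := h'
            exact hcc ⟨k', by omega⟩
        rw [if_neg hA, if_neg hb, if_neg hcc]
        norm_num

lemma theta36_supp {n : ℕ} (h : ¬ (n % 3 = 0)) : coeff (R := ℤ) n (thetaE 3 6) = 0 := by
  rw [thetaE, coeff_mk, if_neg (fun hc => h (ds_mod0 hc))]

lemma psi9_supp {n : ℕ} (h : ¬ (n % 3 = 0)) : coeff (R := ℤ) n (psiSub 9) = 0 := by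
  rw [psiSub, coeff_mk, if_neg]
  rintro ⟨k, hk⟩
  omega

/-! ### complex part : cube roots of unity -/

lemma exists_om : ∃ w : ℂ, w^2 + w + 1 = 0 := by
  obtain ⟨z, hz⟩ := Complex.exists_root (f := Polynomial.X^2 + Polynomial.X + Polynomial.C 1) (by
    have h2 : (Polynomial.X^2 + Polynomial.X + Polynomial.C 1 : Polynomial ℂ).degree = 2 := by
      compute_degree!
    rw [h2]
    norm_num)
  refine ⟨z, ?_⟩
  simpa only [Polynomial.IsRoot, Polynomial.eval_add, Polynomial.eval_pow, Polynomial.eval_X,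
    Polynomial.eval_C] using hz

def om : ℂ := Classical.choose exists_om

lemma om_spec : om^2 + om + 1 = 0 := Classical.choose_spec exists_om

lemma om3 : om^3 = 1 := by linear_combination (om - 1) * om_spec

lemma om_pow_dvd {t : ℕ} (h : t % 3 = 0) : om^t = 1 := by
  obtain ⟨m, hm⟩ : ∃ m, t = 3*m := ⟨t/3, by omega⟩
  rw [hm, pow_mul, om3, one_pow]

lemma om_pow_spec {t : ℕ} (h : ¬ t % 3 = 0) : (om^t)^2 + om^t + 1 = 0 := by
  have hsplit : om^t = om^(3*(t/3)) * om^(t % 3) := by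
    rw [← pow_add]
    congr 1
    omega
  rw [hsplit, pow_mul, om3, one_pow, one_mul]
  rcases (by omega : t % 3 = 1 ∨ t % 3 = 2) with h1 | h1 <;> rw [h1]
  · rw [pow_one]
    exact om_spec
  · linear_combination om * om3 + om_spec

/-! ### complex Euler products -/

def Ec (j : ℕ) : PowerSeries ℂ := plim (fun k => 1 - X ^ (j*(k+1)))

lemma regQc {u : ℕ} (hu : 1 ≤ u) : Reg (fun k => (1:PowerSeries ℂ) - X ^ (u*(k+1))) := by
  intro k n hn
  have hk : k + 1 ≤ u * (k+1) := Nat.le_mul_of_pos_left _ (by omega)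
  rw [map_sub, coeff_X_pow, if_neg (by omega)]
  ring

lemma regQc' {u : ℕ} (hu : 1 ≤ u) (c : ℕ → ℂ) :
    Reg (fun k => (1:PowerSeries ℂ) - C (R := ℂ) (c k) * X ^ (u*(k+1))) := by
  intro k n hn
  have hk : k + 1 ≤ u * (k+1) := Nat.le_mul_of_pos_left _ (by omega)
  rw [map_sub, coeff_C_mul, coeff_X_pow, if_neg (by omega)]
  ring

lemma Ec_ne_zero {j : ℕ} (hj : 1 ≤ j) : Ec j ≠ 0 := by
  intro h
  have h2 := plim_const_one (regQc hj)
  rw [show plim (fun k => (1:PowerSeries ℂ) - X ^ (j*(k+1))) = Ec j from rfl, h, map_zero] at h2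
  exact one_ne_zero h2.symm

lemma map_plim {R S : Type*} [CommRing R] [CommRing S] (f : R →+* S) (g : ℕ → PowerSeries R) :
    PowerSeries.map f (plim g) = plim (fun k => PowerSeries.map f (g k)) := by
  ext n
  rw [coeff_map, plim, plim, coeff_mk, coeff_mk, ← map_prod, coeff_map]

lemma rescale_plim {R : Type*} [CommRing R] (a : R) (g : ℕ → PowerSeries R) :
    rescale a (plim g) = plim (fun k => rescale a (g k)) := by
  ext n
  rw [coeff_rescale, plim, plim, coeff_mk, coeff_mk, ← map_prod, coeff_rescale]

lemma rescale_X_pow {R : Type*} [CommRing R] (a : R) (e : ℕ) :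
    rescale a ((X:PowerSeries R)^e) = C (R := R) (a^e) * X^e := by
  ext n
  rw [coeff_rescale, coeff_C_mul, coeff_X_pow]
  split_ifs with h
  · subst h; ring
  · ring

lemma map_eulerSub (j : ℕ) : PowerSeries.map (Int.castRingHom ℂ) (eulerSub j) = Ec j := by
  have hfun : (fun k => PowerSeries.map (Int.castRingHom ℂ) ((1:PowerSeries ℤ) - X ^ (j*(k+1))))
      = fun k => (1:PowerSeries ℂ) - X ^ (j*(k+1)) := by
    funext k
    rw [map_sub, map_one, map_pow, PowerSeries.map_X]
  rw [eulerSub_eq_plim, map_plim, hfun, Ec]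

lemma rescale_Ec (a : ℂ) (j : ℕ) :
    rescale a (Ec j) = plim (fun k => 1 - C (R := ℂ) (a^(j*(k+1))) * X^(j*(k+1))) := by
  have hfun : (fun k => rescale a ((1:PowerSeries ℂ) - X ^ (j*(k+1))))
      = fun k => (1:PowerSeries ℂ) - C (R := ℂ) (a^(j*(k+1))) * X^(j*(k+1)) := by
    funext k
    rw [map_sub, map_one, rescale_X_pow]
  rw [Ec, rescale_plim, hfun]

lemma tripleFactor {t : ℕ} (ht : ¬ t % 3 = 0) :
    ((1:PowerSeries ℂ) - X^t) * (1 - C (R := ℂ) (om^t) * X^t) * (1 - C (R := ℂ) ((om^2)^t) * X^t)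
      = 1 - X^(3*t) := by
  have hC : (C (R := ℂ) (om^t))^2 + C (R := ℂ) (om^t) + 1 = 0 := by
    have h := congrArg (C (R := ℂ)) (om_pow_spec ht)
    simpa only [map_add, map_pow, map_one, map_zero] using h
  have hC2 : C (R := ℂ) ((om^2)^t) = (C (R := ℂ) (om^t))^2 := by
    rw [show ((om^2)^t) = (om^t)^2 from by rw [← pow_mul, ← pow_mul, Nat.mul_comm]]
    exact map_pow _ _ _
  have hX3 : (X:PowerSeries ℂ)^(3*t) = (X^t)^3 := by
    rw [← pow_mul, Nat.mul_comm]
  rw [hC2, hX3]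
  linear_combination (-(X^t : PowerSeries ℂ) + C (R := ℂ) (om^t) * (X^t)^2
    - (C (R := ℂ) (om^t) - 1) * (X^t)^3) * hC

lemma sameFactor {t : ℕ} (ht : t % 3 = 0) :
    ((1:PowerSeries ℂ) - X^t) * (1 - C (R := ℂ) (om^t) * X^t) * (1 - C (R := ℂ) ((om^2)^t) * X^t)
      = ((1 - X^t) * (1 - X^t)) * (1 - X^t) := by
  have h1 : om^t = 1 := om_pow_dvd ht
  have h2 : ((om^2)^t) = 1 := by
    rw [← pow_mul, Nat.mul_comm, pow_mul, h1, one_pow]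
  rw [h1, h2, map_one, one_mul]

lemma star {j : ℕ} (hj1 : 1 ≤ j) (hj3 : ¬ j % 3 = 0) :
    Ec j * rescale om (Ec j) * rescale (om^2) (Ec j) * Ec (9*j) = Ec (3*j)^4 := by
  have r0 := regQc hj1
  have r1 := regQc' hj1 (fun k => om^(j*(k+1)))
  have r2 := regQc' hj1 (fun k => (om^2)^(j*(k+1)))
  have r9 := regQc (u := 9*j) (by omega)
  have r3 := regQc (u := 3*j) (by omega)
  rw [rescale_Ec om j, rescale_Ec (om^2) j]
  rw [show Ec j = plim (fun k => 1 - X ^ (j*(k+1))) from rfl,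
    plim_mul r0 r1, plim_mul (r0.mul r1) r2]
  have key : ∀ m : ℕ,
      (∏ k ∈ range (3*m), (((1:PowerSeries ℂ) - X ^ (j*(k+1)))
          * (1 - C (R := ℂ) (om^(j*(k+1))) * X^(j*(k+1))))
          * (1 - C (R := ℂ) ((om^2)^(j*(k+1))) * X^(j*(k+1))))
        * (∏ k ∈ range m, ((1:PowerSeries ℂ) - X ^ (9*j*(k+1))))
      = (∏ k ∈ range m, (((1:PowerSeries ℂ) - X ^ (3*j*(k+1)))
          * (1 - X ^ (3*j*(k+1)))) * (1 - X ^ (3*j*(k+1))))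
        * (∏ k ∈ range (3*m), ((1:PowerSeries ℂ) - X ^ (3*j*(k+1)))) := by
    intro m
    induction m with
    | zero => simp
    | succ m ih =>
      have hL : (∏ k ∈ range (3*(m+1)), (((1:PowerSeries ℂ) - X ^ (j*(k+1)))
            * (1 - C (R := ℂ) (om^(j*(k+1))) * X^(j*(k+1))))
            * (1 - C (R := ℂ) ((om^2)^(j*(k+1))) * X^(j*(k+1))))
          = (∏ k ∈ range (3*m), (((1:PowerSeries ℂ) - X ^ (j*(k+1)))
            * (1 - C (R := ℂ) (om^(j*(k+1))) * X^(j*(k+1))))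
            * (1 - C (R := ℂ) ((om^2)^(j*(k+1))) * X^(j*(k+1))))
            * ((1 - X ^ (3*j*(3*m+1)))
              * (1 - X ^ (3*j*(3*m+2)))
              * (((1 - X ^ (3*j*(m+1))) * (1 - X ^ (3*j*(m+1)))) * (1 - X ^ (3*j*(m+1))))) := by
        rw [show 3*(m+1) = (3*m+1+1)+1 from by ring, prod_range_succ, prod_range_succ,
          prod_range_succ]
        rw [show j*(3*m+1+1+1) = j*(3*m+3) from by ring,
          show j*(3*m+1+1) = j*(3*m+2) from by ring,
          show j*(3*m+0+1) = j*(3*m+1) from by ring]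
        have hm1 : ¬ (j*(3*m+1)) % 3 = 0 := by
          rw [Nat.mul_mod, show (3*m+1) % 3 = 1 from by omega, mul_one]
          omega
        have hm2 : ¬ (j*(3*m+2)) % 3 = 0 := by
          rw [Nat.mul_mod, show (3*m+2) % 3 = 2 from by omega]
          omega
        have hm3 : (j*(3*m+3)) % 3 = 0 := by
          rw [Nat.mul_mod, show (3*m+3) % 3 = 0 from by omega, mul_zero]
          omega
        rw [tripleFactor (t := j*(3*m+1)) hm1,
          tripleFactor (t := j*(3*m+2)) hm2,
          sameFactor (t := j*(3*m+3)) hm3]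
        rw [show 3*(j*(3*m+1)) = 3*j*(3*m+1) from by ring,
          show 3*(j*(3*m+2)) = 3*j*(3*m+2) from by ring,
          show j*(3*m+3) = 3*j*(m+1) from by ring]
        ring
      have h9 : (∏ k ∈ range (m+1), ((1:PowerSeries ℂ) - X ^ (9*j*(k+1))))
          = (∏ k ∈ range m, ((1:PowerSeries ℂ) - X ^ (9*j*(k+1))))
            * (1 - X ^ (3*j*(3*m+3))) := by
        rw [prod_range_succ, show 9*j*(m+1) = 3*j*(3*m+3) from by ring]
      have hc : (∏ k ∈ range (m+1), (((1:PowerSeries ℂ) - X ^ (3*j*(k+1)))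
            * (1 - X ^ (3*j*(k+1)))) * (1 - X ^ (3*j*(k+1))))
          = (∏ k ∈ range m, (((1:PowerSeries ℂ) - X ^ (3*j*(k+1)))
            * (1 - X ^ (3*j*(k+1)))) * (1 - X ^ (3*j*(k+1))))
            * (((1 - X ^ (3*j*(m+1))) * (1 - X ^ (3*j*(m+1)))) * (1 - X ^ (3*j*(m+1)))) := by
        rw [prod_range_succ]
      have h3 : (∏ k ∈ range (3*(m+1)), ((1:PowerSeries ℂ) - X ^ (3*j*(k+1))))
          = (∏ k ∈ range (3*m), ((1:PowerSeries ℂ) - X ^ (3*j*(k+1))))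
            * ((1 - X ^ (3*j*(3*m+1))) * (1 - X ^ (3*j*(3*m+2))) * (1 - X ^ (3*j*(3*m+3)))) := by
        rw [show 3*(m+1) = (3*m+1+1)+1 from by ring, prod_range_succ, prod_range_succ,
          prod_range_succ]
        rw [show 3*j*(3*m+1+1+1) = 3*j*(3*m+3) from by ring,
          show 3*j*(3*m+1+1) = 3*j*(3*m+2) from by ring,
          show 3*j*(3*m+0+1) = 3*j*(3*m+1) from by ring]
        ring
      rw [hL, h9, hc, h3]
      linear_combination ((1 - X ^ (3*j*(3*m+1))) * (1 - X ^ (3*j*(3*m+2)))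
        * (1 - X ^ (3*j*(3*m+3)))
        * (((1 - X ^ (3*j*(m+1))) * (1 - X ^ (3*j*(m+1)))) * (1 - X ^ (3*j*(m+1))))) * ih
  refine Eq.trans (plim_mul_eq_plim_mul ((r0.mul r1).mul r2) r9
    ((r3.mul r3).mul r3) r3 ?_) ?_
  · intro n
    exact ⟨3*n, n, n, 3*n, by omega, by omega, by omega, by omega, key n⟩
  · have h4 : Ec (3*j)^4 = ((Ec (3*j) * Ec (3*j)) * Ec (3*j)) * Ec (3*j) := by ring
    rw [h4, show Ec (3*j) = plim (fun k => 1 - X ^ (3*j*(k+1))) from rfl,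
      plim_mul r3 r3, plim_mul (r3.mul r3) r3]

/-! ### final assembly -/

def PM (f : PowerSeries ℤ) : PowerSeries ℂ := PowerSeries.map (Int.castRingHom ℂ) f

lemma rescale_supp3 (f : PowerSeries ℂ) (h : ∀ n, ¬ n % 3 = 0 → coeff (R := ℂ) n f = 0)
    (a : ℂ) (ha : a^3 = 1) : rescale a f = f := by
  ext n
  rw [coeff_rescale]
  by_cases h3 : n % 3 = 0
  · obtain ⟨m, hm⟩ : ∃ m, n = 3*m := ⟨n/3, by omega⟩
    rw [hm, pow_mul, ha, one_pow, one_mul]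
  · rw [h n h3]
    ring

lemma xS_supp : ∀ n, ¬ n % 3 = 0 → coeff (R := ℂ) n (PM (thetaE 3 6)) = 0 := fun n h => by
  rw [PM, coeff_map, theta36_supp h, map_zero]

lemma yS_supp : ∀ n, ¬ n % 3 = 0 → coeff (R := ℂ) n (PM (psiSub 9)) = 0 := fun n h => by
  rw [PM, coeff_map, psi9_supp h, map_zero]

lemma rescale_X' (a : ℂ) : rescale a (X : PowerSeries ℂ) = C (R := ℂ) a * X := by
  have h := rescale_X_pow a 1
  simpa using h

lemma om2_cube : (om^2)^3 = 1 := by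
  rw [← pow_mul, Nat.mul_comm, pow_mul, om3, one_pow]

lemma PM_mul (f g : PowerSeries ℤ) : PM (f * g) = PM f * PM g := map_mul _ _ _
lemma PM_add (f g : PowerSeries ℤ) : PM (f + g) = PM f + PM g := map_add _ _ _
lemma PM_pow (f : PowerSeries ℤ) (n : ℕ) : PM (f ^ n) = PM f ^ n := map_pow _ _ _
lemma PM_X : PM X = X := PowerSeries.map_X _
lemma PM_euler (j : ℕ) : PM (eulerSub j) = Ec j := map_eulerSub j

lemma MAINC : (Ec 6 * Ec 9^2)^3 * (PM (psiSub 9))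
      + X^3 * (PM (psiSub 9))^4 * (Ec 3 * Ec 18)^3
    = (PM (psiSub 3))^4 * (Ec 3 * Ec 18)^3 := by
  have g1C : (PM (psiSub 1)) * Ec 1 = Ec 2^2 := by
    have h := congrArg PM (gauss (j := 1) (le_refl 1))
    simp only [PM_mul, PM_pow, PM_euler, show 2*1 = 2 from rfl] at h
    exact h
  have g3C : (PM (psiSub 3)) * Ec 3 = Ec 6^2 := by
    have h := congrArg PM (gauss (j := 3) (by norm_num))
    simp only [PM_mul, PM_pow, PM_euler, show 2*3 = 6 from rfl] at h
    exact h
  have g9C : (PM (psiSub 9)) * Ec 9 = Ec 18^2 := by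
    have h := congrArg PM (gauss (j := 9) (by norm_num))
    simp only [PM_mul, PM_pow, PM_euler, show 2*9 = 18 from rfl] at h
    exact h
  have jpC : (PM (thetaE 3 6)) * (Ec 3 * Ec 18) = Ec 6 * Ec 9^2 := by
    have h := congrArg PM jp36
    simp only [PM_mul, PM_pow, PM_euler] at h
    exact h
  have dsC : (PM (psiSub 1)) = (PM (thetaE 3 6)) + (PM (psiSub 9)) * X := by
    have h := congrArg PM ds
    simp only [PM_add, PM_mul, PM_X] at h
    exact h
  have hxo : rescale om (PM (thetaE 3 6)) = (PM (thetaE 3 6)) := rescale_supp3 _ xS_supp om om3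
  have hxo2 : rescale (om^2) (PM (thetaE 3 6)) = (PM (thetaE 3 6)) := rescale_supp3 _ xS_supp (om^2) om2_cube
  have hyo : rescale om (PM (psiSub 9)) = (PM (psiSub 9)) := rescale_supp3 _ yS_supp om om3
  have hyo2 : rescale (om^2) (PM (psiSub 9)) = (PM (psiSub 9)) := rescale_supp3 _ yS_supp (om^2) om2_cube
  have s1 : Ec 1 * rescale om (Ec 1) * rescale (om^2) (Ec 1) * Ec 9 = Ec 3^4 := by
    have h := star (j := 1) (le_refl 1) (by norm_num)
    rwa [show 9*1 = 9 from rfl, show 3*1 = 3 from rfl] at h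
  have s2 : Ec 2 * rescale om (Ec 2) * rescale (om^2) (Ec 2) * Ec 18 = Ec 6^4 := by
    have h := star (j := 2) (by norm_num) (by norm_num)
    rwa [show 9*2 = 18 from rfl, show 3*2 = 6 from rfl] at h
  have hCom : (C (R := ℂ) om)^2 + C (R := ℂ) om + 1 = 0 := by
    have h := congrArg (C (R := ℂ)) om_spec
    simpa only [map_add, map_pow, map_one, map_zero] using h
  have hrp : rescale om (PM (psiSub 1)) = (PM (thetaE 3 6)) + C (R := ℂ) om * (PM (psiSub 9) * X) := by
    rw [dsC, map_add, map_mul, hxo, hyo, rescale_X']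
    ring
  have hrp2 : rescale (om^2) (PM (psiSub 1)) = (PM (thetaE 3 6)) + (C (R := ℂ) om)^2 * (PM (psiSub 9) * X) := by
    rw [dsC, map_add, map_mul, hxo2, hyo2, rescale_X', map_pow]
    ring
  have cube : (PM (psiSub 1)) * rescale om (PM (psiSub 1)) * rescale (om^2) (PM (psiSub 1)) = (PM (thetaE 3 6))^3 + (PM (psiSub 9)*X)^3 := by
    rw [hrp, hrp2, dsC]
    linear_combination (PM (thetaE 3 6)^2*(PM (psiSub 9)*X) + C (R := ℂ) om * (PM (thetaE 3 6)) * (PM (psiSub 9)*X)^2 + (C (R := ℂ) om - 1) * (PM (psiSub 9)*X)^3) * hCom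
  have a2 : rescale om (PM (psiSub 1)) * rescale om (Ec 1) = (rescale om (Ec 2))^2 := by
    have h := congrArg (rescale om) g1C
    rwa [map_mul, map_pow] at h
  have a3 : rescale (om^2) (PM (psiSub 1)) * rescale (om^2) (Ec 1) = (rescale (om^2) (Ec 2))^2 := by
    have h := congrArg (rescale (om^2)) g1C
    rwa [map_mul, map_pow] at h
  have a123 : (PM (psiSub 1) * Ec 1) * (rescale om (PM (psiSub 1)) * rescale om (Ec 1))
      * (rescale (om^2) (PM (psiSub 1)) * rescale (om^2) (Ec 1))
      = Ec 2^2 * (rescale om (Ec 2))^2 * (rescale (om^2) (Ec 2))^2 := by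
    rw [g1C, a2, a3]
  have s2sq : (Ec 2 * rescale om (Ec 2) * rescale (om^2) (Ec 2) * Ec 18)^2 = (Ec 6^4)^2 := by
    rw [s2]
  have KEY : (PM (thetaE 3 6)^3 + (PM (psiSub 9)*X)^3) * Ec 3^4 * Ec 18^2 = Ec 6^8 * Ec 9 := by
    calc (PM (thetaE 3 6)^3 + (PM (psiSub 9)*X)^3) * Ec 3^4 * Ec 18^2
        = (PM (psiSub 1) * rescale om (PM (psiSub 1)) * rescale (om^2) (PM (psiSub 1)))
          * (Ec 1 * rescale om (Ec 1) * rescale (om^2) (Ec 1) * Ec 9) * Ec 18^2 := by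
          rw [cube, s1]
      _ = (Ec 2^2 * (rescale om (Ec 2))^2 * (rescale (om^2) (Ec 2))^2) * Ec 9 * Ec 18^2 := by
          linear_combination (Ec 9 * Ec 18^2) * a123
      _ = Ec 6^8 * Ec 9 := by
          linear_combination Ec 9 * s2sq
  have jpc3 : (PM (thetaE 3 6) * (Ec 3 * Ec 18))^3 = (Ec 6 * Ec 9^2)^3 := by rw [jpC]
  have g3c4 : (PM (psiSub 3) * Ec 3)^4 = (Ec 6^2)^4 := by rw [g3C]
  apply mul_right_cancel₀ (Ec_ne_zero (j := 3) (by norm_num))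
  calc ((Ec 6 * Ec 9^2)^3 * (PM (psiSub 9)) + X^3 * (PM (psiSub 9))^4 * (Ec 3 * Ec 18)^3) * Ec 3
      = (PM (psiSub 9)) * Ec 18 * ((PM (thetaE 3 6)^3 + (PM (psiSub 9)*X)^3) * Ec 3^4 * Ec 18^2) := by
        linear_combination (-(PM (psiSub 9) * Ec 3)) * jpc3
    _ = (PM (psiSub 9)) * Ec 18 * (Ec 6^8 * Ec 9) := by rw [KEY]
    _ = Ec 6^8 * Ec 18^3 := by
        linear_combination (Ec 6^8 * Ec 18) * g9C
    _ = (PM (psiSub 3))^4 * (Ec 3 * Ec 18)^3 * Ec 3 := by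
        linear_combination (-(Ec 18^3)) * g3c4

lemma MAINZ :
    (eulerSub 6 * eulerSub 9^2)^3 * psiSub 9
      + X^3 * psiSub 9^4 * (eulerSub 3 * eulerSub 18)^3
    = psiSub 3^4 * (eulerSub 3 * eulerSub 18)^3 := by
  have hinj : Function.Injective
      (PowerSeries.map (Int.castRingHom ℂ) : PowerSeries ℤ → PowerSeries ℂ) := by
    intro f g h
    ext n
    have h2 := congrArg (coeff (R := ℂ) n) h
    rw [coeff_map, coeff_map, Int.coe_castRingHom] at h2
    exact Int.cast_injective h2
  apply hinj
  simp only [map_add, map_mul, map_pow, PowerSeries.map_X, map_eulerSub]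
  exact MAINC

lemma psiSub_const (j : ℕ) : constantCoeff (R := ℤ) (psiSub j) = 1 := by
  rw [← coeff_zero_eq_constantCoeff, psiSub, coeff_mk, if_pos ⟨0, by norm_num⟩]

lemma eulerSub_const {j : ℕ} (hj : 1 ≤ j) : constantCoeff (R := ℤ) (eulerSub j) = 1 := by
  rw [← coeff_zero_eq_constantCoeff, eulerSub_eq_plim]
  exact plim_const_one (regQ hj)

lemma psiSub9_ne_zero : psiSub 9 ≠ 0 := by
  intro h
  have h2 := psiSub_const 9
  rw [h, map_zero] at h2
  exact one_ne_zero h2.symm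

end JTPaux

open JTPaux in
theorem A_cube_add_psi_cube :
    ASub 3 ^ 3 + PowerSeries.X ^ 3 * psiSub 9 ^ 3 =
      psiSub 3 ^ 4 * PowerSeries.invOfUnit (psiSub 9) 1 := by
  have hinv1 : psiSub 9 * PowerSeries.invOfUnit (psiSub 9) 1 = 1 :=
    PowerSeries.mul_invOfUnit _ 1 (by rw [psiSub_const]; rfl)
  have hinv2 : (eulerSub 3 * eulerSub 18) *
      PowerSeries.invOfUnit (eulerSub 3 * eulerSub 18) 1 = 1 :=
    PowerSeries.mul_invOfUnit _ 1 (by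
      rw [map_mul, eulerSub_const (by norm_num : (1:ℕ) ≤ 3),
        eulerSub_const (by norm_num : (1:ℕ) ≤ 18)]
      norm_num)
  have hne : psiSub 9 * (eulerSub 3 * eulerSub 18)^3 ≠ 0 :=
    mul_ne_zero psiSub9_ne_zero (pow_ne_zero _ (mul_ne_zero
      (eulerSub_ne_zero (by norm_num)) (eulerSub_ne_zero (by norm_num))))
  apply mul_right_cancel₀ hne
  have hA : ASub 3 = eulerSub 6 * eulerSub 9^2 *
      PowerSeries.invOfUnit (eulerSub 3 * eulerSub 18) 1 := rfl
  rw [hA]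
  have k2 : ((eulerSub 3 * eulerSub 18) *
      PowerSeries.invOfUnit (eulerSub 3 * eulerSub 18) 1)^3 = 1 := by
    rw [hinv2, one_pow]
  linear_combination ((eulerSub 6 * eulerSub 9^2)^3 * psiSub 9) * k2
    - (psiSub 3^4 * (eulerSub 3 * eulerSub 18)^3) * hinv1 + MAINZ
end
end
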